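/- arXiv:1403.7724 — 6 statements merged into one kernel-verified Lean document; each statement's English description precedes it below -/
import Mathlib

section
/- Let h : ℤ → ℂ be finitely supported and not identically zero, and suppose its symbol h*(z) = Σ_{α∈ℤ} h(α) z^α factors as h*(z) = c·z^m·∏_{θ∈Θ} (z − θ^{−1})^{k_θ} for all z ∈ ℂ∖{0}, where c ∈ ℂ∖{0}, m ∈ ℤ, Θ ⊂ ℂ∖{0} is a finite set, and k_θ ≥ 1 for each θ ∈ Θ. Then a sequence c : ℤ → ℂ satisfies h * c = 0 if and only if there exist (necessarily unique) polynomials p_θ ∈ ℂ[x] with deg p_θ ≤ k_θ − 1 such that c(n) = Σ_{θ∈Θ} p_θ(n) θ^n for all n ∈ ℤ; that is, the kernel of the convolution operator c ↦ h*c is the direct sum ⊕_{θ∈Θ} e_θ·Π_{k_θ−1}. -/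
/-- Convolution `(h*c)(n) = Σ_m h(m) c(n−m)` of a finitely supported sequence `h` with an
arbitrary sequence `c` on `ℤ`. -/
noncomputable def conv1 (h : ℤ →₀ ℂ) (c : ℤ → ℂ) (n : ℤ) : ℂ :=
  h.sum fun m v => v * c (n - m)

open Polynomial

noncomputable def Sh : Module.End ℂ (ℤ → ℂ) where
  toFun c := fun n => c (n - 1)
  map_add' _ _ := rfl
  map_smul' _ _ := rfl

lemma Sh_pow_apply (i : ℕ) (c : ℤ → ℂ) (n : ℤ) : (Sh ^ i) c n = c (n - i) := by
  induction i generalizing c n with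
  | zero => simp
  | succ i ih =>
    rw [pow_succ]
    show (Sh ^ i) (Sh c) n = _
    rw [ih]
    show c (n - ↑i - 1) = _
    congr 1
    push_cast
    ring

lemma aevalSh_apply (Q : ℂ[X]) (c : ℤ → ℂ) (n : ℤ) :
    (aeval Sh Q) c n = ∑ i ∈ Finset.range (Q.natDegree + 1), Q.coeff i * c (n - i) := by
  rw [Polynomial.aeval_eq_sum_range]
  rw [LinearMap.coe_sum, Finset.sum_apply, Finset.sum_apply]
  refine Finset.sum_congr rfl fun i _ => ?_
  rw [LinearMap.smul_apply, Pi.smul_apply, smul_eq_mul, Sh_pow_apply]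

noncomputable def shPoly (R p : ℂ[X]) (θ : ℂ) : ℂ[X] :=
  ∑ i ∈ Finset.range (R.natDegree + 1), (R.coeff i * θ⁻¹ ^ i) • p.comp (X - Polynomial.C (i : ℂ))

lemma aevalSh_exp (R p : ℂ[X]) (θ : ℂ) (hθ : θ ≠ 0) :
    (aeval Sh R) (fun n : ℤ => p.eval (n:ℂ) * θ ^ n) =
      fun n : ℤ => (shPoly R p θ).eval (n:ℂ) * θ ^ n := by
  funext n
  rw [aevalSh_apply, shPoly, eval_finset_sum, Finset.sum_mul]
  refine Finset.sum_congr rfl fun i _ => ?_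
  rw [eval_smul, smul_eq_mul, eval_comp, eval_sub, eval_X, eval_C]
  have h2 : θ ^ ((n:ℤ) - (i:ℕ)) = θ ^ (n:ℤ) * θ⁻¹ ^ i := by
    rw [zpow_sub₀ hθ, zpow_natCast, div_eq_mul_inv, inv_pow]
  rw [h2]
  push_cast
  ring

lemma shPoly_coeff_top (R p : ℂ[X]) (θ : ℂ) (hp : p ≠ 0) :
    (shPoly R p θ).coeff p.natDegree = R.eval θ⁻¹ * p.leadingCoeff := by
  rw [shPoly, Polynomial.finset_sum_coeff]
  have key : ∀ i : ℕ, (p.comp (X - Polynomial.C (i:ℂ))).coeff p.natDegree = p.leadingCoeff := by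
    intro i
    have hdeg : (p.comp (X - Polynomial.C (i:ℂ))).natDegree = p.natDegree := by
      rw [natDegree_comp, natDegree_X_sub_C, mul_one]
    have hlc : (p.comp (X - Polynomial.C (i:ℂ))).leadingCoeff = p.leadingCoeff := by
      rw [leadingCoeff_comp (by rw [natDegree_X_sub_C]; exact one_ne_zero),
        leadingCoeff_X_sub_C, one_pow, mul_one]
    rw [← hlc, Polynomial.leadingCoeff, hdeg]
  calc (∑ i ∈ Finset.range (R.natDegree + 1),
        ((R.coeff i * θ⁻¹ ^ i) • p.comp (X - Polynomial.C (i : ℂ))).coeff p.natDegree)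
      = ∑ i ∈ Finset.range (R.natDegree + 1), R.coeff i * θ⁻¹ ^ i * p.leadingCoeff := by
        refine Finset.sum_congr rfl fun i _ => ?_
        rw [Polynomial.coeff_smul, smul_eq_mul, key]
    _ = R.eval θ⁻¹ * p.leadingCoeff := by
        rw [← Finset.sum_mul, Polynomial.eval_eq_sum_range]

lemma poly_zero_of_int_eval (q : ℂ[X]) (hq : ∀ n : ℤ, q.eval (n:ℂ) = 0) : q = 0 := by
  refine Polynomial.eq_zero_of_infinite_isRoot q ?_
  have : Set.range (fun n : ℤ => (n : ℂ)) ⊆ {x | q.IsRoot x} := by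
    rintro x ⟨n, rfl⟩; exact hq n
  exact Set.Infinite.mono this (Set.infinite_range_of_injective Int.cast_injective)

lemma annihilate (R p : ℂ[X]) (θ : ℂ) (hθ : θ ≠ 0) (hR : R.eval θ⁻¹ ≠ 0)
    (hz : ∀ n : ℤ, (aeval Sh R) (fun n : ℤ => p.eval (n:ℂ) * θ ^ n) n = 0) : p = 0 := by
  by_contra hp
  have h1 := aevalSh_exp R p θ hθ
  have h2 : ∀ n : ℤ, (shPoly R p θ).eval (n:ℂ) * θ ^ n = 0 := by
    intro n; rw [← congrFun h1 n]; exact hz n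
  have h3 : shPoly R p θ = 0 := by
    refine poly_zero_of_int_eval _ fun n => ?_
    have := h2 n
    have hpow : θ ^ n ≠ 0 := zpow_ne_zero _ hθ
    exact (mul_eq_zero.1 this).resolve_right hpow
  have := shPoly_coeff_top R p θ hp
  rw [h3] at this
  simp only [Polynomial.coeff_zero] at this
  exact hR (by
    have hlc : p.leadingCoeff ≠ 0 := Polynomial.leadingCoeff_ne_zero.2 hp
    rcases mul_eq_zero.1 this.symm with h | h
    · exact h
    · exact absurd h hlc)

lemma exp_zero_fun (θ : ℂ) : (fun n : ℤ => (0:ℂ[X]).eval (n:ℂ) * θ ^ n) = 0 := by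
  funext n; simp

lemma kill (θ : ℂ) (hθ : θ ≠ 0) : ∀ (k : ℕ) (p : ℂ[X]), (p.natDegree < k ∨ p = 0) →
    (aeval Sh ((X - Polynomial.C θ⁻¹) ^ k)) (fun n : ℤ => p.eval (n:ℂ) * θ ^ n) = 0 := by
  intro k
  induction k with
  | zero =>
    rintro p (h | rfl)
    · omega
    · rw [exp_zero_fun, map_zero]
  | succ k ih =>
    rintro p hp
    rcases hp with hdeg | rfl
    swap
    · rw [exp_zero_fun, map_zero]
    set q : ℂ[X] := θ⁻¹ • (p.comp (X - Polynomial.C 1) - p) with hq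
    have step : (aeval Sh (X - Polynomial.C θ⁻¹)) (fun n : ℤ => p.eval (n:ℂ) * θ ^ n)
        = fun n : ℤ => q.eval (n:ℂ) * θ ^ n := by
      funext n
      rw [map_sub, aeval_X, aeval_C]
      show (Sh fun n : ℤ => p.eval (n:ℂ) * θ ^ n) n
          - (algebraMap ℂ (Module.End ℂ (ℤ → ℂ)) θ⁻¹ (fun n : ℤ => p.eval (n:ℂ) * θ ^ n)) n
          = q.eval (n:ℂ) * θ ^ n
      rw [Module.algebraMap_end_apply]
      show p.eval ((n - 1 : ℤ):ℂ) * θ ^ (n - 1) - θ⁻¹ * (p.eval (n:ℂ) * θ ^ n)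
          = q.eval (n:ℂ) * θ ^ n
      have hpow : θ ^ (n - 1) = θ ^ n * θ⁻¹ := by
        rw [zpow_sub₀ hθ, zpow_one, div_eq_mul_inv]
      rw [hpow, hq]
      simp only [eval_smul, smul_eq_mul, eval_sub, eval_comp, eval_X, eval_C]
      push_cast
      ring
    have hqd : q = 0 ∨ q.natDegree < k := by
      by_cases hd0 : p.comp (X - Polynomial.C 1) - p = 0
      · left; rw [hq, hd0, smul_zero]
      · right
        have hp0 : p ≠ 0 := by
          rintro rfl; simp at hd0
        have hcomp0 : p.comp (X - Polynomial.C 1) ≠ 0 := by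
          intro hcc
          apply hp0
          have := leadingCoeff_comp (q := X - Polynomial.C (1:ℂ)) (p := p)
            (by rw [natDegree_X_sub_C]; exact one_ne_zero)
          rw [hcc, leadingCoeff_zero, leadingCoeff_X_sub_C, one_pow, mul_one] at this
          exact leadingCoeff_eq_zero.1 this.symm
        have hdegc : (p.comp (X - Polynomial.C (1:ℂ))).degree = p.degree := by
          rw [degree_eq_natDegree hcomp0, degree_eq_natDegree hp0,
            natDegree_comp, natDegree_X_sub_C, mul_one]
        have hlcc : (p.comp (X - Polynomial.C (1:ℂ))).leadingCoeff = p.leadingCoeff := by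
          rw [leadingCoeff_comp (by rw [natDegree_X_sub_C]; exact one_ne_zero),
            leadingCoeff_X_sub_C, one_pow, mul_one]
        have hlt : (p.comp (X - Polynomial.C 1) - p).degree < p.degree :=
          hdegc ▸ degree_sub_lt hdegc hcomp0 hlcc
        have hlt2 : (p.comp (X - Polynomial.C 1) - p).natDegree < p.natDegree := by
          apply natDegree_lt_natDegree hd0
          rwa [degree_eq_natDegree hp0] at hlt ⊢
        calc q.natDegree ≤ (p.comp (X - Polynomial.C 1) - p).natDegree :=
              natDegree_smul_le _ _
          _ < k := by omega
    rw [pow_succ, map_mul, Module.End.mul_apply, step]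
    exact ih q (Or.symm hqd)

lemma kill_prod (Θ : Finset ℂ) (hΘ : ∀ θ ∈ Θ, θ ≠ 0) (k : ℂ → ℕ) (θ0 : ℂ) (hθ0 : θ0 ∈ Θ)
    (p : ℂ[X]) (hp : p.natDegree < k θ0 ∨ p = 0) :
    (aeval Sh (∏ θ ∈ Θ, (X - Polynomial.C θ⁻¹) ^ k θ))
      (fun n : ℤ => p.eval (n:ℂ) * θ0 ^ n) = 0 := by
  have hsplit : (∏ θ ∈ Θ, (X - Polynomial.C θ⁻¹) ^ k θ)
      = (∏ θ ∈ Θ.erase θ0, (X - Polynomial.C θ⁻¹) ^ k θ) * (X - Polynomial.C θ0⁻¹) ^ k θ0 := by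
    rw [mul_comm]
    exact (Finset.mul_prod_erase _ _ hθ0).symm
  rw [hsplit, map_mul, Module.End.mul_apply, kill θ0 (hΘ θ0 hθ0) (k θ0) p hp, map_zero]

lemma indep (Θ : Finset ℂ) (hΘ : ∀ θ ∈ Θ, θ ≠ 0) (p : ℂ → ℂ[X])
    (hz : ∀ n : ℤ, ∑ θ ∈ Θ, (p θ).eval (n:ℂ) * θ ^ n = 0) : ∀ θ ∈ Θ, p θ = 0 := by
  intro θ0 hθ0
  set R : ℂ[X] := ∏ θ ∈ Θ.erase θ0, (X - Polynomial.C θ⁻¹) ^ ((p θ).natDegree + 1) with hR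
  have hF : (∑ θ ∈ Θ, fun n : ℤ => (p θ).eval (n:ℂ) * θ ^ n) = (0 : ℤ → ℂ) := by
    funext n
    rw [Finset.sum_apply]
    exact hz n
  have hmapped : (aeval Sh R) (fun n : ℤ => (p θ0).eval (n:ℂ) * θ0 ^ n) = 0 := by
    have h1 : ∀ θ ∈ Θ.erase θ0,
        (aeval Sh R) (fun n : ℤ => (p θ).eval (n:ℂ) * θ ^ n) = 0 := by
      intro θ hθ
      have := kill_prod (Θ.erase θ0) (fun a ha => hΘ a (Finset.mem_of_mem_erase ha))
        (fun θ => (p θ).natDegree + 1) θ hθ (p θ) (Or.inl (Nat.lt_succ_self _))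
      exact this
    have h2 : (0 : ℤ → ℂ) = ∑ θ ∈ Θ, (aeval Sh R) (fun n : ℤ => (p θ).eval (n:ℂ) * θ ^ n) := by
      rw [← map_sum, hF, map_zero]
    rw [← Finset.add_sum_erase _ _ hθ0] at h2
    rw [Finset.sum_congr rfl h1, Finset.sum_const_zero, add_zero] at h2
    exact h2.symm
  have hRne : R.eval θ0⁻¹ ≠ 0 := by
    rw [hR, eval_prod]
    refine Finset.prod_ne_zero_iff.2 fun θ hθ => ?_
    rw [eval_pow, eval_sub, eval_X, eval_C]
    refine pow_ne_zero _ (sub_ne_zero.2 fun hh => ?_)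
    exact (Finset.mem_erase.1 hθ).1 (inv_injective hh).symm
  exact annihilate R (p θ0) θ0 (hΘ θ0 hθ0) hRne (fun n => by rw [hmapped]; rfl)

lemma ker_window (Q : ℂ[X]) (h0 : Q.coeff 0 ≠ 0) (hQm : Q.Monic) (c : ℤ → ℂ)
    (hc : ∀ n : ℤ, (aeval Sh Q) c n = 0)
    (hwin : ∀ j : ℤ, 0 ≤ j → j < (Q.natDegree : ℤ) → c j = 0) : ∀ n, c n = 0 := by
  set K := Q.natDegree with hK
  have hrel : ∀ ν : ℤ, ∑ i ∈ Finset.range (K + 1), Q.coeff i * c (ν - i) = 0 :=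
    fun ν => by rw [← aevalSh_apply]; exact hc ν
  have main : ∀ N : ℕ, ∀ n : ℤ, -(N:ℤ) ≤ n → n < (K:ℤ) + N → c n = 0 := by
    intro N
    induction N with
    | zero => intro n h1 h2; exact hwin n (by omega) (by omega)
    | succ N ih =>
      intro n h1 h2
      by_cases hcase : -(N:ℤ) ≤ n ∧ n < (K:ℤ) + N
      · exact ih n hcase.1 hcase.2
      push_neg at hcase
      by_cases hup : n = (K:ℤ) + N
      · have hr := hrel n
        rw [Finset.sum_range_succ'] at hr
        have hz : ∀ i ∈ Finset.range K, Q.coeff (i + 1) * c (n - ((i:ℕ) + 1 : ℕ)) = 0 := by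
          intro i hi
          have hib := Finset.mem_range.1 hi
          rw [ih (n - ((i:ℕ) + 1 : ℕ)) (by push_cast; omega) (by push_cast; omega), mul_zero]
        rw [Finset.sum_eq_zero hz, zero_add, Nat.cast_zero, sub_zero] at hr
        exact (mul_eq_zero.1 hr).resolve_left h0
      · have hdown : n = -((N:ℤ) + 1) := by omega
        have hr := hrel (n + K)
        rw [Finset.sum_range_succ] at hr
        have hz : ∀ i ∈ Finset.range K, Q.coeff i * c (n + (K:ℤ) - i) = 0 := by
          intro i hi
          have hib := Finset.mem_range.1 hi
          rw [ih (n + (K:ℤ) - i) (by omega) (by omega), mul_zero]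
        rw [Finset.sum_eq_zero hz, zero_add] at hr
        rw [hQm.coeff_natDegree, one_mul] at hr
        have : n + (K:ℤ) - (K:ℤ) = n := by ring
        rwa [this] at hr
  intro n
  exact main (n.natAbs + 1) n (by omega) (by omega)

lemma symbol_inj (h : ℤ →₀ ℂ) (hz : ∀ z : ℂ, z ≠ 0 → (h.sum fun α v => v * z ^ α) = 0) :
    h = 0 := by
  set N : ℕ := h.support.sup Int.natAbs with hN
  have hsupN : ∀ α ∈ h.support, 0 ≤ α + N := by
    intro α hα
    have := Finset.le_sup (f := Int.natAbs) hα
    omega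
  set P : ℂ[X] := ∑ α ∈ h.support, Polynomial.monomial (α + N).toNat (h α) with hP
  have hPeval : ∀ z : ℂ, z ≠ 0 → P.eval z = 0 := by
    intro z hz0
    rw [hP, Polynomial.eval_finset_sum]
    have : ∀ α ∈ h.support,
        (Polynomial.monomial (α + N).toNat (h α)).eval z = (h α * z ^ α) * z ^ (N:ℤ) := by
      intro α hα
      rw [Polynomial.eval_monomial]
      rw [← zpow_natCast z, Int.toNat_of_nonneg (hsupN α hα), zpow_add₀ hz0, mul_assoc]
    rw [Finset.sum_congr rfl this, ← Finset.sum_mul]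
    have : ∑ α ∈ h.support, h α * z ^ α = 0 := hz z hz0
    rw [this, zero_mul]
  have hP0 : P = 0 := by
    refine Polynomial.eq_zero_of_infinite_isRoot P ?_
    refine Set.Infinite.mono (fun x hx => hPeval x hx) ?_
    exact Set.Finite.infinite_compl (Set.finite_singleton 0)
  ext α
  by_cases hα : α ∈ h.support
  · have : P.coeff (α + N).toNat = h α := by
      rw [hP, Polynomial.finset_sum_coeff]
      rw [Finset.sum_eq_single α]
      · rw [Polynomial.coeff_monomial, if_pos rfl]
      · intro β hβ hne
        rw [Polynomial.coeff_monomial, if_neg]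
        have h1 := hsupN α hα
        have h2 := hsupN β hβ
        omega
      · intro hc; exact absurd hα hc
    rw [← this, hP0, Polynomial.coeff_zero, Finsupp.coe_zero, Pi.zero_apply]
  · rw [Finsupp.notMem_support_iff.1 hα]; rfl

noncomputable instance degreeLT.fd (n : ℕ) : FiniteDimensional ℂ (degreeLT ℂ n) :=
  Module.Finite.equiv (degreeLTEquiv ℂ n).symm

noncomputable def Tmap (Θ : Finset ℂ) (k : ℂ → ℕ) :
    ((θ : {x // x ∈ Θ}) → degreeLT ℂ (k θ.1)) →ₗ[ℂ] (ℤ → ℂ) where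
  toFun p := fun n => ∑ θ ∈ Θ.attach, ((p θ : ℂ[X]).eval (n:ℂ)) * (θ.1 : ℂ) ^ n
  map_add' p q := by
    funext n
    simp only [Pi.add_apply, ← Finset.sum_add_distrib]
    refine Finset.sum_congr rfl fun θ _ => ?_
    rw [Submodule.coe_add, Polynomial.eval_add, add_mul]
  map_smul' a p := by
    funext n
    simp only [RingHom.id_apply, Pi.smul_apply, smul_eq_mul, Finset.mul_sum]
    refine Finset.sum_congr rfl fun θ _ => ?_
    rw [Submodule.coe_smul, Polynomial.eval_smul, smul_eq_mul, mul_assoc]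

lemma finrank_Tdom (Θ : Finset ℂ) (k : ℂ → ℕ) :
    Module.finrank ℂ ((θ : {x // x ∈ Θ}) → degreeLT ℂ (k θ.1)) = ∑ θ ∈ Θ, k θ := by
  rw [Module.finrank_pi_fintype ℂ]
  have : ∀ θ : {x // x ∈ Θ}, Module.finrank ℂ (degreeLT ℂ (k θ.1)) = k θ.1 := by
    intro θ
    rw [(degreeLTEquiv ℂ (k θ.1)).finrank_eq]
    exact Module.finrank_fin_fun ℂ
  rw [Finset.sum_congr rfl fun θ _ => this θ]
  exact Finset.sum_attach Θ k


/-- univariate kernel theorem: if the symbol of a nonzero, finitely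
supported `h : ℤ → ℂ` factors as `h*(z) = C·z^m·∏_{θ∈Θ}(z − θ⁻¹)^{k_θ}`, then `h*c = 0`
if and only if `c(n) = Σ_{θ∈Θ} p_θ(n) θ^n` for (necessarily unique) polynomials `p_θ` of
degree at most `k_θ − 1`; i.e. `ker(h*·) = ⊕_{θ∈Θ} e_θ·Π_{k_θ−1}`. -/
theorem stmt0 (h : ℤ →₀ ℂ) (hne : h ≠ 0) (C : ℂ) (hC : C ≠ 0) (m : ℤ)
    (Θ : Finset ℂ) (hΘ : ∀ θ ∈ Θ, θ ≠ 0) (k : ℂ → ℕ) (hk : ∀ θ ∈ Θ, 1 ≤ k θ)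
    (hfac : ∀ z : ℂ, z ≠ 0 →
      (h.sum fun α v => v * z ^ α) = C * z ^ m * ∏ θ ∈ Θ, (z - θ⁻¹) ^ k θ) :
    ∀ c : ℤ → ℂ,
      ((∀ n : ℤ, conv1 h c n = 0) ↔
        ∃ p : ℂ → Polynomial ℂ,
          (∀ θ ∈ Θ, (p θ).natDegree ≤ k θ - 1) ∧
          ∀ n : ℤ, c n = ∑ θ ∈ Θ, (p θ).eval (n : ℂ) * θ ^ n) ∧
      ∀ p p' : ℂ → Polynomial ℂ,
        (∀ θ ∈ Θ, (p θ).natDegree ≤ k θ - 1) →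
        (∀ θ ∈ Θ, (p' θ).natDegree ≤ k θ - 1) →
        (∀ n : ℤ,
          (∑ θ ∈ Θ, (p θ).eval (n : ℂ) * θ ^ n) = ∑ θ ∈ Θ, (p' θ).eval (n : ℂ) * θ ^ n) →
        ∀ θ ∈ Θ, p θ = p' θ := by
  classical
  set Q : ℂ[X] := ∏ θ ∈ Θ, (X - Polynomial.C θ⁻¹) ^ k θ with hQdef
  have hQmonic : Q.Monic := monic_prod_of_monic _ _ fun θ _ => (monic_X_sub_C _).pow _
  have hQeval : ∀ z : ℂ, Q.eval z = ∏ θ ∈ Θ, (z - θ⁻¹) ^ k θ := by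
    intro z
    rw [hQdef, eval_prod]
    exact Finset.prod_congr rfl fun θ _ => by rw [eval_pow, eval_sub, eval_X, eval_C]
  have hQ0 : Q.coeff 0 ≠ 0 := by
    rw [Polynomial.coeff_zero_eq_eval_zero, hQeval]
    refine Finset.prod_ne_zero_iff.2 fun θ hθ => pow_ne_zero _ ?_
    simpa using inv_ne_zero (hΘ θ hθ)
  set K := Q.natDegree with hK
  have hKsum : K = ∑ θ ∈ Θ, k θ := by
    rw [hK, hQdef, natDegree_prod _ _ fun θ hθ => pow_ne_zero _ (X_sub_C_ne_zero _)]
    exact Finset.sum_congr rfl fun θ _ => by rw [natDegree_pow, natDegree_X_sub_C, mul_one]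
  set H : ℤ →₀ ℂ := ∑ j ∈ Finset.range (K + 1), Finsupp.single (m + j) (C * Q.coeff j)
    with hHdef
  have hHsum : ∀ (f : ℤ → ℂ → ℂ), (∀ a, f a 0 = 0) →
      (∀ a b₁ b₂, f a (b₁ + b₂) = f a b₁ + f a b₂) →
      H.sum f = ∑ j ∈ Finset.range (K + 1), f (m + j) (C * Q.coeff j) := by
    intro f h0 hadd
    rw [hHdef, ← Finsupp.sum_finset_sum_index h0 hadd]
    exact Finset.sum_congr rfl fun j _ => Finsupp.sum_single_index (h0 _)
  have hhH : h = H := by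
    have hd : h - H = 0 := by
      apply symbol_inj
      intro z hz0
      rw [Finsupp.sum_sub_index fun a b₁ b₂ => sub_mul b₁ b₂ (z ^ a)]
      rw [hfac z hz0]
      rw [hHsum (fun a v => v * z ^ a) (fun a => zero_mul _) (fun a b₁ b₂ => add_mul b₁ b₂ _)]
      have : ∑ j ∈ Finset.range (K + 1), (C * Q.coeff j) * z ^ (m + (j:ℕ) : ℤ)
          = C * z ^ m * Q.eval z := by
        rw [Polynomial.eval_eq_sum_range, ← hK, Finset.mul_sum]
        refine Finset.sum_congr rfl fun j _ => ?_
        rw [zpow_add₀ hz0, zpow_natCast]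
        ring
      rw [this, hQeval, sub_self]
    exact sub_eq_zero.1 hd
  have hconv : ∀ (c : ℤ → ℂ) (n : ℤ), conv1 h c n = C * (aeval Sh Q) c (n - m) := by
    intro c n
    rw [conv1, hhH,
      hHsum (fun α v => v * c (n - α)) (fun a => zero_mul _) (fun a b₁ b₂ => add_mul b₁ b₂ _),
      aevalSh_apply, ← hK, Finset.mul_sum]
    refine Finset.sum_congr rfl fun j _ => ?_
    have : n - (m + (j:ℕ)) = n - m - (j:ℕ) := by ring
    rw [this]
    ring
  have hker : ∀ c : ℤ → ℂ, (∀ n, conv1 h c n = 0) ↔ (∀ ν, (aeval Sh Q) c ν = 0) := by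
    intro c
    constructor
    · intro hc ν
      have h1 := hc (ν + m)
      rw [hconv] at h1
      have h2 : ν + m - m = ν := by ring
      rw [h2] at h1
      exact (mul_eq_zero.1 h1).resolve_left hC
    · intro hc n
      rw [hconv, hc, mul_zero]
  have hfwd : ∀ (p : ℂ[X]) (θ : ℂ), θ ∈ Θ → (p.natDegree < k θ ∨ p = 0) →
      (aeval Sh Q) (fun n : ℤ => p.eval (n:ℂ) * θ ^ n) = 0 := by
    intro p θ hθ hp
    have := kill_prod Θ hΘ k θ hθ p hp
    rwa [← hQdef] at this
  have hTker : ∀ p, ∀ ν, (aeval Sh Q) (Tmap Θ k p) ν = 0 := by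
    intro p ν
    have hsplit : Tmap Θ k p
        = ∑ θ ∈ Θ.attach, (fun n : ℤ => ((p θ : ℂ[X])).eval (n:ℂ) * (θ.1 : ℂ) ^ n) := by
      funext n
      rw [Finset.sum_apply]
      rfl
    rw [hsplit, map_sum, Finset.sum_apply]
    refine Finset.sum_eq_zero fun θ _ => ?_
    have hb : ((p θ : ℂ[X])).natDegree < k θ.1 ∨ (p θ : ℂ[X]) = 0 := by
      rcases eq_or_ne ((p θ : ℂ[X])) 0 with h0 | h0
      · exact Or.inr h0
      · exact Or.inl ((natDegree_lt_iff_degree_lt h0).2 (mem_degreeLT.1 (p θ).2))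
    rw [hfwd _ _ θ.2 hb]
    rfl
  have hker_inj : ∀ c₁ : ℤ → ℂ, (∀ ν, (aeval Sh Q) c₁ ν = 0) →
      (∀ i : Fin K, c₁ ((i : ℕ) : ℤ) = 0) → ∀ n, c₁ n = 0 := by
    intro c₁ h1 h2
    refine ker_window Q hQ0 hQmonic c₁ h1 fun j hj1 hj2 => ?_
    have hj : j = ((j.toNat : ℕ) : ℤ) := by omega
    rw [hj]
    exact h2 ⟨j.toNat, by omega⟩
  set Φ : (ℤ → ℂ) →ₗ[ℂ] (Fin K → ℂ) :=
    LinearMap.pi (fun i : Fin K => LinearMap.proj ((i : ℕ) : ℤ)) with hΦdef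
  have hΦapp : ∀ (c : ℤ → ℂ) (i : Fin K), Φ c i = c ((i : ℕ) : ℤ) := fun c i => rfl
  have hinj : Function.Injective (Φ.comp (Tmap Θ k)) := by
    rw [← LinearMap.ker_eq_bot, LinearMap.ker_eq_bot']
    intro p hp0
    have hwin : ∀ i : Fin K, (Tmap Θ k p) ((i : ℕ) : ℤ) = 0 := by
      intro i
      have := congrFun hp0 i
      rwa [LinearMap.comp_apply, hΦapp] at this
    have hzero : ∀ n, (Tmap Θ k p) n = 0 := hker_inj _ (hTker p) hwin
    set pbar : ℂ → ℂ[X] := fun θ => if hθ : θ ∈ Θ then (p ⟨θ, hθ⟩ : ℂ[X]) else 0 with hpbar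
    have hpbar_mem : ∀ θ : {x // x ∈ Θ}, pbar θ.1 = (p θ : ℂ[X]) := by
      intro θ
      rw [hpbar]
      simp only [θ.2, dif_pos]
    have hsum0 : ∀ n : ℤ, ∑ θ ∈ Θ, (pbar θ).eval (n : ℂ) * θ ^ n = 0 := by
      intro n
      rw [← Finset.sum_attach Θ (fun θ => (pbar θ).eval (n : ℂ) * θ ^ n)]
      rw [Finset.sum_congr rfl fun θ _ => by rw [hpbar_mem θ]]
      exact hzero n
    have hall := indep Θ hΘ pbar hsum0
    funext θ
    have h0 : (p θ : ℂ[X]) = 0 := by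
      rw [← hpbar_mem θ]
      exact hall θ.1 θ.2
    exact Subtype.ext h0
  have hfr : Module.finrank ℂ ((θ : {x // x ∈ Θ}) → degreeLT ℂ (k θ.1))
      = Module.finrank ℂ (Fin K → ℂ) := by
    rw [finrank_Tdom, Module.finrank_fin_fun, hKsum]
  have hsurj := (LinearMap.injective_iff_surjective_of_finrank_eq_finrank hfr).1 hinj
  intro c
  constructor
  · constructor
    · intro hc
      have hcQ := (hker c).1 hc
      obtain ⟨p, hp⟩ := hsurj (Φ c)
      have heq : ∀ n, Tmap Θ k p n = c n := by
        have hdker : ∀ ν, (aeval Sh Q) (Tmap Θ k p - c) ν = 0 := by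
          intro ν
          rw [map_sub]
          show (aeval Sh Q) (Tmap Θ k p) ν - (aeval Sh Q) c ν = 0
          rw [hTker p ν, hcQ ν, sub_self]
        have hdwin : ∀ i : Fin K, (Tmap Θ k p - c) ((i : ℕ) : ℤ) = 0 := by
          intro i
          have := congrFun hp i
          rw [LinearMap.comp_apply, hΦapp, hΦapp] at this
          show Tmap Θ k p ((i : ℕ) : ℤ) - c ((i : ℕ) : ℤ) = 0
          rw [this, sub_self]
        intro n
        have := hker_inj _ hdker hdwin n
        have h2 : Tmap Θ k p n - c n = 0 := this
        exact sub_eq_zero.1 h2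
      refine ⟨fun θ => if hθ : θ ∈ Θ then (p ⟨θ, hθ⟩ : ℂ[X]) else 0, ?_, ?_⟩
      · intro θ hθ
        simp only [dif_pos hθ]
        rcases eq_or_ne ((p ⟨θ, hθ⟩ : ℂ[X])) 0 with h0 | h0
        · rw [h0]
          simp
        · have h3 : ((p ⟨θ, hθ⟩ : ℂ[X])).natDegree < k θ :=
            (natDegree_lt_iff_degree_lt h0).2 (mem_degreeLT.1 (p ⟨θ, hθ⟩).2)
          omega
      · intro n
        rw [← heq n]
        show Tmap Θ k p n = _
        rw [show (Tmap Θ k p) n = ∑ θ ∈ Θ.attach, ((p θ : ℂ[X])).eval (n:ℂ) * (θ.1 : ℂ) ^ n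
          from rfl]
        rw [← Finset.sum_attach Θ
          (fun θ => ((if hθ : θ ∈ Θ then (p ⟨θ, hθ⟩ : ℂ[X]) else 0)).eval (n : ℂ) * θ ^ n)]
        refine Finset.sum_congr rfl fun θ _ => ?_
        simp only [θ.2, dif_pos]
    · rintro ⟨p, hp1, hp2⟩
      refine (hker c).2 ?_
      intro ν
      have hcsum : c = ∑ θ ∈ Θ, (fun n : ℤ => (p θ).eval (n : ℂ) * θ ^ n) := by
        funext n
        rw [Finset.sum_apply]
        exact hp2 n
      rw [hcsum, map_sum, Finset.sum_apply]
      refine Finset.sum_eq_zero fun θ hθ => ?_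
      have hb : (p θ).natDegree < k θ := by
        have := hp1 θ hθ
        have := hk θ hθ
        omega
      rw [hfwd _ _ hθ (Or.inl hb)]
      rfl
  · intro p p' hb hb' heq θ hθ
    have hz : ∀ n : ℤ, ∑ ϑ ∈ Θ, ((p ϑ - p' ϑ)).eval (n : ℂ) * ϑ ^ n = 0 := by
      intro n
      have : ∀ ϑ ∈ Θ, ((p ϑ - p' ϑ)).eval (n : ℂ) * ϑ ^ n
          = (p ϑ).eval (n : ℂ) * ϑ ^ n - (p' ϑ).eval (n : ℂ) * ϑ ^ n := by
        intro ϑ _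
        rw [Polynomial.eval_sub, sub_mul]
      rw [Finset.sum_congr rfl this, Finset.sum_sub_distrib, heq n, sub_self]
    have := indep Θ hΘ (fun ϑ => p ϑ - p' ϑ) hz θ hθ
    exact sub_eq_zero.1 this
end

section
/- Let Q be a finite-dimensional subspace of Π = ℝ[z_1,…,z_s]. Then Q is D-invariant if and only if its orthogonal complement Q^⊥ := {f ∈ Π : (q,f) = 0 for all q ∈ Q} with respect to the Bombieri bilinear form is an ideal of Π. -/
open MvPolynomial

/-- The formal differential operator `∂^{|β|}/∂z^β` applied to a multivariate polynomial. -/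
noncomputable def DOp {s : ℕ} (β : Fin s →₀ ℕ) (f : MvPolynomial (Fin s) ℝ) :
    MvPolynomial (Fin s) ℝ :=
  ∑ δ ∈ f.support,
    MvPolynomial.monomial (δ - β) (f.coeff δ * ∏ j, (Nat.descFactorial (δ j) (β j) : ℝ))

/-- `q(D) f`: the constant coefficient differential operator associated with `q`, applied
to `f`. -/
noncomputable def polyD {s : ℕ} (q f : MvPolynomial (Fin s) ℝ) : MvPolynomial (Fin s) ℝ :=
  ∑ β ∈ q.support, q.coeff β • DOp β f

/-- A subspace `Q` is `D`-invariant if `q(D) p ∈ Q` for every `p ∈ Q` and every polynomial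
`q`. -/
def DInvariant {s : ℕ} (Q : Submodule ℝ (MvPolynomial (Fin s) ℝ)) : Prop :=
  ∀ q : MvPolynomial (Fin s) ℝ, ∀ p ∈ Q, polyD q p ∈ Q

/-- The Bombieri (apolar) bilinear form `(f,g) = Σ_β β! f_β g_β`. -/
noncomputable def bombieri {s : ℕ} (f g : MvPolynomial (Fin s) ℝ) : ℝ :=
  ∑ β ∈ f.support ∪ g.support,
    (∏ j, (Nat.factorial (β j) : ℝ)) * f.coeff β * g.coeff β

section Stmt2Aux

variable {s : ℕ}

lemma bombieri_eq_sum (f g : MvPolynomial (Fin s) ℝ) (S : Finset (Fin s →₀ ℕ))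
    (hf : f.support ⊆ S) (hg : g.support ⊆ S) :
    bombieri f g = ∑ β ∈ S, (∏ j, (Nat.factorial (β j) : ℝ)) * f.coeff β * g.coeff β := by
  unfold bombieri
  apply Finset.sum_subset (Finset.union_subset hf hg)
  intro β _ hβ
  obtain ⟨h, -⟩ := Finset.notMem_union.mp hβ
  simp [MvPolynomial.notMem_support_iff.mp h]

lemma bombieri_comm (f g : MvPolynomial (Fin s) ℝ) : bombieri f g = bombieri g f := by
  unfold bombieri
  rw [Finset.union_comm]
  exact Finset.sum_congr rfl fun β _ => by ring

lemma bombieri_add_left (f f' g : MvPolynomial (Fin s) ℝ) :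
    bombieri (f + f') g = bombieri f g + bombieri f' g := by
  set S := f.support ∪ f'.support ∪ g.support with hS
  rw [bombieri_eq_sum (f + f') g S
      (le_trans (MvPolynomial.support_add) (by intro x hx; simp only [hS, Finset.mem_union] at *; tauto))
      (by intro x hx; simp only [hS, Finset.mem_union] at *; tauto),
    bombieri_eq_sum f g S (by intro x hx; simp only [hS, Finset.mem_union] at *; tauto) (by intro x hx; simp only [hS, Finset.mem_union] at *; tauto),
    bombieri_eq_sum f' g S (by intro x hx; simp only [hS, Finset.mem_union] at *; tauto) (by intro x hx; simp only [hS, Finset.mem_union] at *; tauto),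
    ← Finset.sum_add_distrib]
  exact Finset.sum_congr rfl fun β _ => by rw [MvPolynomial.coeff_add]; ring

lemma bombieri_smul_left (c : ℝ) (f g : MvPolynomial (Fin s) ℝ) :
    bombieri (c • f) g = c * bombieri f g := by
  set S := f.support ∪ g.support with hS
  rw [bombieri_eq_sum (c • f) g S
      (le_trans (MvPolynomial.support_smul) (by intro x hx; simp only [hS, Finset.mem_union] at *; tauto))
      (by intro x hx; simp only [hS, Finset.mem_union] at *; tauto),
    bombieri_eq_sum f g S (by intro x hx; simp only [hS, Finset.mem_union] at *; tauto) (by intro x hx; simp only [hS, Finset.mem_union] at *; tauto),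
    Finset.mul_sum]
  exact Finset.sum_congr rfl fun β _ => by rw [MvPolynomial.coeff_smul]; simp; ring

lemma bombieri_add_right (f g g' : MvPolynomial (Fin s) ℝ) :
    bombieri f (g + g') = bombieri f g + bombieri f g' := by
  rw [bombieri_comm, bombieri_add_left, bombieri_comm g f, bombieri_comm g' f]

lemma bombieri_smul_right (c : ℝ) (f g : MvPolynomial (Fin s) ℝ) :
    bombieri f (c • g) = c * bombieri f g := by
  rw [bombieri_comm, bombieri_smul_left, bombieri_comm]

lemma bombieri_zero_right (f : MvPolynomial (Fin s) ℝ) : bombieri f 0 = 0 := by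
  have := bombieri_smul_right (0 : ℝ) f 0
  simpa using this

lemma bombieri_monomial (α γ : Fin s →₀ ℕ) (a c : ℝ) :
    bombieri (MvPolynomial.monomial α a) (MvPolynomial.monomial γ c) =
      if α = γ then (∏ j, (Nat.factorial (α j) : ℝ)) * a * c else 0 := by
  by_cases h : α = γ
  · subst h
    rw [bombieri_eq_sum _ _ {α} (MvPolynomial.support_monomial_subset)
        (MvPolynomial.support_monomial_subset), Finset.sum_singleton]
    simp [MvPolynomial.coeff_monomial]
  · rw [bombieri_eq_sum _ _ {α, γ}
        (le_trans MvPolynomial.support_monomial_subset (by simp))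
        (le_trans MvPolynomial.support_monomial_subset (by simp)),
      Finset.sum_pair h]
    simp [MvPolynomial.coeff_monomial, h, Ne.symm h]

lemma DOp_eq_sum (β : Fin s →₀ ℕ) (f : MvPolynomial (Fin s) ℝ) (S : Finset (Fin s →₀ ℕ))
    (hf : f.support ⊆ S) :
    DOp β f = ∑ δ ∈ S,
      MvPolynomial.monomial (δ - β) (f.coeff δ * ∏ j, (Nat.descFactorial (δ j) (β j) : ℝ)) := by
  unfold DOp
  apply Finset.sum_subset hf
  intro δ _ hδ
  simp [MvPolynomial.notMem_support_iff.mp hδ]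

lemma DOp_monomial (β α : Fin s →₀ ℕ) (a : ℝ) :
    DOp β (MvPolynomial.monomial α a) =
      MvPolynomial.monomial (α - β) (a * ∏ j, (Nat.descFactorial (α j) (β j) : ℝ)) := by
  rw [DOp_eq_sum β _ {α} MvPolynomial.support_monomial_subset, Finset.sum_singleton]
  simp [MvPolynomial.coeff_monomial]

lemma DOp_add (β : Fin s →₀ ℕ) (f g : MvPolynomial (Fin s) ℝ) :
    DOp β (f + g) = DOp β f + DOp β g := by
  set S := f.support ∪ g.support with hS
  rw [DOp_eq_sum β (f + g) S (le_trans MvPolynomial.support_add (le_refl _)),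
    DOp_eq_sum β f S Finset.subset_union_left, DOp_eq_sum β g S Finset.subset_union_right,
    ← Finset.sum_add_distrib]
  exact Finset.sum_congr rfl fun δ _ => by
    rw [MvPolynomial.coeff_add, add_mul, map_add]

lemma polyD_eq_sum (q f : MvPolynomial (Fin s) ℝ) (S : Finset (Fin s →₀ ℕ))
    (hq : q.support ⊆ S) :
    polyD q f = ∑ β ∈ S, q.coeff β • DOp β f := by
  unfold polyD
  apply Finset.sum_subset hq
  intro β _ hβ
  simp [MvPolynomial.notMem_support_iff.mp hβ]

lemma polyD_monomial_left (β : Fin s →₀ ℕ) (b : ℝ) (f : MvPolynomial (Fin s) ℝ) :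
    polyD (MvPolynomial.monomial β b) f = b • DOp β f := by
  rw [polyD_eq_sum _ f {β} MvPolynomial.support_monomial_subset, Finset.sum_singleton]
  simp [MvPolynomial.coeff_monomial]

lemma polyD_add_left (q q' f : MvPolynomial (Fin s) ℝ) :
    polyD (q + q') f = polyD q f + polyD q' f := by
  set S := q.support ∪ q'.support with hS
  rw [polyD_eq_sum (q + q') f S (le_trans MvPolynomial.support_add (le_refl _)),
    polyD_eq_sum q f S Finset.subset_union_left, polyD_eq_sum q' f S Finset.subset_union_right,
    ← Finset.sum_add_distrib]
  exact Finset.sum_congr rfl fun β _ => by rw [MvPolynomial.coeff_add, add_smul]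

lemma polyD_add_right (q f g : MvPolynomial (Fin s) ℝ) :
    polyD q (f + g) = polyD q f + polyD q g := by
  unfold polyD
  rw [← Finset.sum_add_distrib]
  exact Finset.sum_congr rfl fun β _ => by rw [DOp_add, smul_add]

lemma prod_desc_fac (β γ : Fin s →₀ ℕ) :
    (∏ j, (Nat.factorial (γ j) : ℝ)) * ∏ j, (Nat.descFactorial ((β + γ) j) (β j) : ℝ) =
      ∏ j, (Nat.factorial ((β + γ) j) : ℝ) := by
  rw [← Finset.prod_mul_distrib]
  refine Finset.prod_congr rfl fun j _ => ?_
  rw [← Nat.cast_mul, Finsupp.add_apply]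
  congr 1
  have := Nat.factorial_mul_descFactorial (show β j ≤ β j + γ j by omega)
  rw [show β j + γ j - β j = γ j by omega] at this
  exact this

lemma key_monomial (β α γ : Fin s →₀ ℕ) (b a c : ℝ) :
    bombieri (polyD (MvPolynomial.monomial β b) (MvPolynomial.monomial α a))
        (MvPolynomial.monomial γ c) =
      bombieri (MvPolynomial.monomial α a)
        (MvPolynomial.monomial β b * MvPolynomial.monomial γ c) := by
  rw [polyD_monomial_left, DOp_monomial, MvPolynomial.smul_monomial,
    MvPolynomial.monomial_mul, bombieri_monomial, bombieri_monomial]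
  by_cases h : α = β + γ
  · subst h
    rw [if_pos rfl, if_pos (by rw [add_tsub_cancel_left])]
    have h2 : β + γ - β = γ := add_tsub_cancel_left β γ
    rw [h2]
    rw [smul_eq_mul, ← prod_desc_fac β γ]
    ring
  · rw [if_neg h]
    by_cases h2 : α - β = γ
    · rw [if_pos h2]
      have hnle : ¬ β ≤ α := by
        intro hle
        exact h (by rw [← h2, add_tsub_cancel_of_le hle])
      obtain ⟨j, hj⟩ : ∃ j, ¬ β j ≤ α j := by
        by_contra hc
        push_neg at hc
        exact hnle (Finsupp.le_def.mpr fun i => hc i)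
      have : (Nat.descFactorial (α j) (β j) : ℝ) = 0 := by
        rw [Nat.descFactorial_eq_zero_iff_lt.mpr (by omega)]; simp
      have hz : (∏ j, (Nat.descFactorial (α j) (β j) : ℝ)) = 0 :=
        Finset.prod_eq_zero (Finset.mem_univ j) this
      rw [smul_eq_mul, hz]
      ring
    · rw [if_neg h2]

lemma key (q p f : MvPolynomial (Fin s) ℝ) :
    bombieri (polyD q p) f = bombieri p (q * f) := by
  induction q using MvPolynomial.induction_on' with
  | add q1 q2 hq1 hq2 =>
    rw [polyD_add_left, bombieri_add_left, add_mul, bombieri_add_right, hq1, hq2]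
  | monomial β b =>
    induction p using MvPolynomial.induction_on' with
    | add p1 p2 hp1 hp2 =>
      rw [polyD_add_right, bombieri_add_left, bombieri_add_left, hp1, hp2]
    | monomial α a =>
      induction f using MvPolynomial.induction_on' with
      | add f1 f2 hf1 hf2 =>
        rw [bombieri_add_right, mul_add, bombieri_add_right, hf1, hf2]
      | monomial γ c => exact key_monomial β α γ b a c

lemma bombieri_sub_right (f g g' : MvPolynomial (Fin s) ℝ) :
    bombieri f (g - g') = bombieri f g - bombieri f g' := by
  rw [sub_eq_add_neg, ← neg_one_smul ℝ g', bombieri_add_right, bombieri_smul_right]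
  ring

lemma bombieri_self_eq_zero {f : MvPolynomial (Fin s) ℝ} (h : bombieri f f = 0) : f = 0 := by
  rw [bombieri_eq_sum f f f.support (le_refl _) (le_refl _)] at h
  rw [← MvPolynomial.support_eq_empty, Finset.eq_empty_iff_forall_notMem]
  intro β hβ
  have hterm := (Finset.sum_eq_zero_iff_of_nonneg ?_).mp h β hβ
  · have hfac : (0:ℝ) < ∏ j, (Nat.factorial (β j) : ℝ) :=
      Finset.prod_pos fun j _ => by positivity
    have hc : f.coeff β ≠ 0 := MvPolynomial.mem_support_iff.mp hβ
    rw [mul_assoc] at hterm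
    rcases mul_eq_zero.mp hterm with h' | h'
    · exact absurd h' (ne_of_gt hfac)
    · exact hc (mul_self_eq_zero.mp h')
  · intro β _
    have hfac : (0:ℝ) ≤ ∏ j, (Nat.factorial (β j) : ℝ) :=
      Finset.prod_nonneg fun j _ => by positivity
    nlinarith [mul_self_nonneg (f.coeff β)]

/-- `f ↦ bombieri f g` as a linear map. -/
noncomputable def bombL (g : MvPolynomial (Fin s) ℝ) : MvPolynomial (Fin s) ℝ →ₗ[ℝ] ℝ where
  toFun f := bombieri f g
  map_add' f f' := bombieri_add_left f f' g
  map_smul' c f := bombieri_smul_left c f g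

/-- The orthogonal complement of `Q` w.r.t. the Bombieri form. -/
noncomputable def bperp (Q : Submodule ℝ (MvPolynomial (Fin s) ℝ)) :
    Submodule ℝ (MvPolynomial (Fin s) ℝ) where
  carrier := {f | ∀ q ∈ Q, bombieri q f = 0}
  zero_mem' := fun q _ => bombieri_zero_right q
  add_mem' := fun hf hg q hq => by
    rw [bombieri_add_right, hf q hq, hg q hq, add_zero]
  smul_mem' := fun c f hf q hq => by
    rw [bombieri_smul_right, hf q hq, mul_zero]

lemma mem_of_perp_perp (Q : Submodule ℝ (MvPolynomial (Fin s) ℝ)) [FiniteDimensional ℝ Q]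
    (p : MvPolynomial (Fin s) ℝ) (hp : ∀ f ∈ bperp Q, bombieri p f = 0) : p ∈ Q := by
  classical
  set φ : Q →ₗ[ℝ] Module.Dual ℝ Q :=
    { toFun := fun q => (bombL (q : MvPolynomial (Fin s) ℝ)).comp Q.subtype
      map_add' := fun q q' => by
        ext x
        simp [bombL, bombieri_add_right]
      map_smul' := fun c q => by
        ext x
        simp [bombL, bombieri_smul_right] } with hφ
  have hinj : Function.Injective φ := by
    rw [← LinearMap.ker_eq_bot, eq_bot_iff]
    intro q hq
    have h0 : ∀ x : Q, bombieri (x : MvPolynomial (Fin s) ℝ) (q : MvPolynomial (Fin s) ℝ) = 0 := by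
      intro x
      have := LinearMap.congr_fun (LinearMap.mem_ker.mp hq) x
      simpa [hφ, bombL] using this
    have : (q : MvPolynomial (Fin s) ℝ) = 0 := bombieri_self_eq_zero (h0 q)
    simpa [Submodule.mem_bot] using Subtype.ext this
  have hsurj : Function.Surjective φ :=
    (LinearMap.injective_iff_surjective_of_finrank_eq_finrank
      (Subspace.dual_finrank_eq (K := ℝ) (V := ↥Q)).symm).mp hinj
  obtain ⟨q0, hq0⟩ := hsurj ((bombL p).comp Q.subtype)
  have hq0' : ∀ x : Q, bombieri (x : MvPolynomial (Fin s) ℝ) (q0 : MvPolynomial (Fin s) ℝ)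
      = bombieri (x : MvPolynomial (Fin s) ℝ) p := by
    intro x
    have := LinearMap.congr_fun hq0 x
    simpa [hφ, bombL] using this
  set r : MvPolynomial (Fin s) ℝ := p - (q0 : MvPolynomial (Fin s) ℝ) with hr
  have hrperp : r ∈ bperp Q := by
    intro q hq
    rw [hr, bombieri_sub_right, hq0' ⟨q, hq⟩, sub_self]
  have h1 : bombieri p r = 0 := hp r hrperp
  have h2 : bombieri (q0 : MvPolynomial (Fin s) ℝ) r = 0 := hrperp _ q0.2
  have hrr : bombieri r r = 0 := by
    rw [hr, bombieri_comm, bombieri_sub_right, bombieri_comm r p, bombieri_comm r _]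
    rw [h1, h2, sub_self]
  have : r = 0 := bombieri_self_eq_zero hrr
  have : p = (q0 : MvPolynomial (Fin s) ℝ) := by
    have := sub_eq_zero.mp (hr ▸ this)
    exact this
  rw [this]
  exact q0.2

end Stmt2Aux

/-- a finite-dimensional subspace `Q` of `ℝ[z_1,…,z_s]` is `D`-invariant if and
only if its orthogonal complement with respect to the Bombieri form is an ideal. -/
theorem stmt2 {s : ℕ} (Q : Submodule ℝ (MvPolynomial (Fin s) ℝ))
    [FiniteDimensional ℝ Q] :
    DInvariant Q ↔
      ∃ I : Ideal (MvPolynomial (Fin s) ℝ),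
        ∀ f : MvPolynomial (Fin s) ℝ, f ∈ I ↔ ∀ q ∈ Q, bombieri q f = 0 := by
  constructor
  · intro hD
    refine ⟨{ carrier := {f | ∀ q ∈ Q, bombieri q f = 0}
              zero_mem' := fun q _ => bombieri_zero_right q
              add_mem' := fun hf hg q hq => by
                rw [bombieri_add_right, hf q hq, hg q hq, add_zero]
              smul_mem' := fun c f hf q hq => by
                rw [smul_eq_mul, ← key c q f]
                exact hf (polyD c q) (hD c q hq) }, fun f => Iff.rfl⟩
  · rintro ⟨I, hI⟩ g p hp
    apply mem_of_perp_perp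
    intro f hf
    rw [key g p f]
    have hfI : f ∈ I := (hI f).mpr hf
    have : g * f ∈ I := I.mul_mem_left g hfI
    exact (hI (g * f)).mp this p hp
end

section
/- Let Q be a finite-dimensional D-invariant subspace of ℝ[z_1,…,z_s] and let q_1,…,q_n be a basis of Q that is orthonormal with respect to the Bombieri bilinear form, i.e. (q_i,q_j) = δ_{ij}. Then every f ∈ Q satisfies f = Σ_{i=1}^n (q_i(D)f)(0)·q_i, and moreover f(x+y) = Σ_{i=1}^n (q_i(D)f)(y)·q_i(x) = Σ_{i=1}^n (q_i(D)f)(x)·q_i(y) for all x, y ∈ ℝ^s. -/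
open MvPolynomial

lemma coeff_DOp {s : ℕ} (β α : Fin s →₀ ℕ) (f : MvPolynomial (Fin s) ℝ) :
    coeff α (DOp β f)
      = f.coeff (α + β) * ∏ j, (Nat.descFactorial ((α + β) j) (β j) : ℝ) := by
  rw [DOp, MvPolynomial.coeff_sum]
  have h : ∀ δ ∈ f.support,
      coeff α (monomial (δ - β) (f.coeff δ * ∏ j, (Nat.descFactorial (δ j) (β j) : ℝ)))
        = if δ = α + β then f.coeff δ * ∏ j, (Nat.descFactorial (δ j) (β j) : ℝ) else 0 := by
    intro δ _
    rw [coeff_monomial]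
    by_cases h1 : δ = α + β
    · subst h1
      simp [add_tsub_cancel_right]
    · rw [if_neg h1]
      by_cases h2 : δ - β = α
      · rw [if_pos h2]
        -- some coordinate has δ j < β j
        have : ∃ j, δ j < β j := by
          by_contra hc
          push_neg at hc
          apply h1
          ext j
          have h3 : (δ - β) j = α j := DFunLike.congr_fun h2 j
          rw [Finsupp.tsub_apply] at h3
          have h4 := hc j
          simp only [Finsupp.add_apply]
          omega
        obtain ⟨j, hj⟩ := this
        have : (Nat.descFactorial (δ j) (β j) : ℝ) = 0 := by
          rw [Nat.descFactorial_eq_zero_iff_lt.2 hj]; simp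
        rw [Finset.prod_eq_zero (Finset.mem_univ j) this, mul_zero]
      · rw [if_neg h2]
  rw [Finset.sum_congr rfl h, Finset.sum_ite_eq']
  by_cases hm : α + β ∈ f.support
  · rw [if_pos hm]
  · rw [if_neg hm, MvPolynomial.notMem_support_iff.1 hm, zero_mul]

noncomputable def DOpLin {s : ℕ} (β : Fin s →₀ ℕ) :
    MvPolynomial (Fin s) ℝ →ₗ[ℝ] MvPolynomial (Fin s) ℝ where
  toFun := DOp β
  map_add' f g := by
    apply MvPolynomial.ext
    intro α
    simp [coeff_DOp, coeff_add, add_mul]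
  map_smul' c f := by
    apply MvPolynomial.ext
    intro α
    simp [coeff_DOp, MvPolynomial.coeff_smul, mul_assoc]

lemma DOp_comm {s : ℕ} (β γ : Fin s →₀ ℕ) (f : MvPolynomial (Fin s) ℝ) :
    DOp β (DOp γ f) = DOp γ (DOp β f) := by
  apply MvPolynomial.ext
  intro α
  have key : ∀ a b c : ℕ,
      Nat.descFactorial (a + b + c) c * Nat.descFactorial (a + b) b
        = Nat.descFactorial (a + c + b) b * Nat.descFactorial (a + c) c := by
    intro a b c
    apply Nat.eq_of_mul_eq_mul_right (Nat.factorial_pos a)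
    have h1 : ∀ u v : ℕ, Nat.descFactorial (u + v) v * u.factorial = (u + v).factorial := by
      intro u v
      have := Nat.factorial_mul_descFactorial (n := u + v) (k := v) (Nat.le_add_left v u)
      simpa [Nat.add_sub_cancel, Nat.mul_comm] using this
    calc Nat.descFactorial (a + b + c) c * Nat.descFactorial (a + b) b * a.factorial
        = Nat.descFactorial (a + b + c) c * (Nat.descFactorial (a + b) b * a.factorial) := by ring
      _ = (a + b + c).factorial := by rw [h1 a b, h1 (a+b) c]
      _ = (a + c + b).factorial := by ring_nf
      _ = Nat.descFactorial (a + c + b) b * (Nat.descFactorial (a + c) c * a.factorial) := by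
          rw [h1 a c, h1 (a+c) b]
      _ = Nat.descFactorial (a + c + b) b * Nat.descFactorial (a + c) c * a.factorial := by ring
  simp only [coeff_DOp]
  rw [add_right_comm α β γ]
  rw [mul_assoc, mul_assoc, ← Finset.prod_mul_distrib, ← Finset.prod_mul_distrib]
  congr 1
  apply Finset.prod_congr rfl
  intro j _
  have h2 := key (α j) (β j) (γ j)
  simp only [Finsupp.add_apply]
  rw [show α j + γ j + β j = α j + β j + γ j from by omega] at h2 ⊢
  exact_mod_cast h2

noncomputable def polyDLin {s : ℕ} (q : MvPolynomial (Fin s) ℝ) :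
    MvPolynomial (Fin s) ℝ →ₗ[ℝ] MvPolynomial (Fin s) ℝ :=
  ∑ β ∈ q.support, q.coeff β • DOpLin β

lemma polyD_eq {s : ℕ} (q f : MvPolynomial (Fin s) ℝ) : polyD q f = polyDLin q f := by
  simp [polyD, polyDLin, LinearMap.sum_apply, DOpLin]

lemma eval_zero_monomial {s : ℕ} (m : Fin s →₀ ℕ) (c : ℝ) :
    MvPolynomial.eval (0 : Fin s → ℝ) (monomial m c) = if m = 0 then c else 0 := by
  rw [eval_monomial, Finsupp.prod_pow]
  by_cases hm : m = 0
  · simp [hm]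
  · rw [if_neg hm]
    obtain ⟨j, hj⟩ : ∃ j, m j ≠ 0 := by
      by_contra hc; push_neg at hc; exact hm (Finsupp.ext hc)
    rw [Finset.prod_eq_zero (Finset.mem_univ j) (by simp [zero_pow hj]), mul_zero]

lemma eval_zero_eq_coeff {s : ℕ} (f : MvPolynomial (Fin s) ℝ) :
    MvPolynomial.eval (0 : Fin s → ℝ) f = coeff 0 f := by
  conv_lhs => rw [f.as_sum]
  rw [map_sum]
  have : ∀ δ ∈ f.support, MvPolynomial.eval (0 : Fin s → ℝ) (monomial δ (coeff δ f))
      = if δ = 0 then coeff δ f else 0 := fun δ _ => eval_zero_monomial _ _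
  rw [Finset.sum_congr rfl this, Finset.sum_ite_eq']
  by_cases h : (0 : Fin s →₀ ℕ) ∈ f.support
  · rw [if_pos h]
  · rw [if_neg h, MvPolynomial.notMem_support_iff.1 h]

lemma eval_zero_DOp {s : ℕ} (β : Fin s →₀ ℕ) (f : MvPolynomial (Fin s) ℝ) :
    MvPolynomial.eval (0 : Fin s → ℝ) (DOp β f)
      = (∏ j, (Nat.factorial (β j) : ℝ)) * coeff β f := by
  rw [eval_zero_eq_coeff, coeff_DOp, zero_add]
  rw [mul_comm]
  congr 1
  apply Finset.prod_congr rfl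
  intro j _
  rw [Nat.descFactorial_self]

lemma polyD_monomial_one {s : ℕ} (β : Fin s →₀ ℕ) (f : MvPolynomial (Fin s) ℝ) :
    polyD (monomial β (1 : ℝ)) f = DOp β f := by
  rw [polyD, support_monomial, if_neg (one_ne_zero)]
  simp [coeff_monomial]

lemma eval_zero_polyD_eq_bombieri {s : ℕ} (g h : MvPolynomial (Fin s) ℝ) :
    MvPolynomial.eval (0 : Fin s → ℝ) (polyD g h) = bombieri g h := by
  rw [polyD, map_sum, bombieri]
  rw [← Finset.sum_subset (Finset.subset_union_left (s₂ := h.support))]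
  · apply Finset.sum_congr rfl
    intro β _
    rw [MvPolynomial.smul_eq_C_mul, map_mul, eval_C, eval_zero_DOp]
    ring
  · intro β _ hβ
    rw [MvPolynomial.notMem_support_iff.1 hβ]
    ring

lemma repr_lemma {s n : ℕ} (q : Fin n → MvPolynomial (Fin s) ℝ)
    (horth : ∀ i j, bombieri (q i) (q j) = if i = j then 1 else 0)
    (f : MvPolynomial (Fin s) ℝ) (hf : f ∈ Submodule.span ℝ (Set.range q)) :
    f = ∑ i, MvPolynomial.eval (0 : Fin s → ℝ) (polyD (q i) f) • q i := by
  obtain ⟨c, hc⟩ := Submodule.mem_span_range_iff_exists_fun ℝ |>.1 hf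
  have key : ∀ i, MvPolynomial.eval (0 : Fin s → ℝ) (polyD (q i) f) = c i := by
    intro i
    rw [← hc, polyD_eq, map_sum, map_sum]
    have : ∀ j ∈ Finset.univ, MvPolynomial.eval (0 : Fin s → ℝ) (polyDLin (q i) (c j • q j))
        = if j = i then c j else 0 := by
      intro j _
      rw [map_smul, MvPolynomial.smul_eq_C_mul, map_mul, eval_C, ← polyD_eq,
        eval_zero_polyD_eq_bombieri, horth]
      by_cases hij : i = j <;> simp [hij, eq_comm]
    rw [Finset.sum_congr rfl this, Finset.sum_ite_eq' Finset.univ i c, if_pos (Finset.mem_univ i)]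
  calc f = ∑ i, c i • q i := hc.symm
    _ = _ := Finset.sum_congr rfl fun i _ => by rw [key]

noncomputable def sh1 {s : ℕ} (j : Fin s) (t : ℝ) : Fin s → MvPolynomial (Fin s) ℝ :=
  fun i => if i = j then X j + C t else X i

lemma DOp_single_monomial {s : ℕ} (j : Fin s) (k : ℕ) (δ : Fin s →₀ ℕ) (c : ℝ) (hc : c ≠ 0) :
    DOp (Finsupp.single j k) (monomial δ c)
      = monomial (δ - Finsupp.single j k) (c * (Nat.descFactorial (δ j) k : ℝ)) := by
  rw [DOp, support_monomial, if_neg hc, Finset.sum_singleton, coeff_monomial, if_pos rfl]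
  congr 1
  congr 1
  rw [Finset.prod_eq_single j]
  · rw [Finsupp.single_eq_same]
  · intro i _ hij
    rw [Finsupp.single_eq_of_ne' (Ne.symm hij), Nat.descFactorial_zero, Nat.cast_one]
  · intro h; exact absurd (Finset.mem_univ j) h

lemma taylor_monomial {s : ℕ} (j : Fin s) (t : ℝ) (δ : Fin s →₀ ℕ) (c : ℝ) (hc : c ≠ 0)
    (N : ℕ) (hδ : δ j < N) :
    MvPolynomial.aeval (sh1 j t) (monomial δ c)
      = ∑ k ∈ Finset.range N,
          (t ^ k / (Nat.factorial k : ℝ)) • DOp (Finsupp.single j k) (monomial δ c) := by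
  have hsub : Finset.range (δ j + 1) ⊆ Finset.range N := Finset.range_subset_range.2 hδ
  rw [← Finset.sum_subset hsub]
  · -- restricted sum
    rw [aeval_monomial, Finsupp.prod_pow]
    rw [← Finset.mul_prod_erase Finset.univ _ (Finset.mem_univ j)]
    have hsh : ∀ i ∈ Finset.univ.erase j, sh1 j t i ^ δ i = X i ^ δ i := by
      intro i hi
      rw [sh1, if_neg (Finset.mem_erase.1 hi).1]
    rw [Finset.prod_congr rfl hsh]
    have hj : sh1 j t j = C t + X j := by rw [sh1, if_pos rfl, add_comm]
    rw [hj, add_pow]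
    rw [Finset.sum_mul, mul_comm (algebraMap ℝ (MvPolynomial (Fin s) ℝ) c), Finset.sum_mul]
    apply Finset.sum_congr rfl
    intro k hk
    have hkle : k ≤ δ j := Nat.lt_succ_iff.1 (Finset.mem_range.1 hk)
    rw [DOp_single_monomial j k δ c hc, MvPolynomial.smul_eq_C_mul, monomial_eq,
      Finsupp.prod_pow, ← Finset.mul_prod_erase Finset.univ _ (Finset.mem_univ j)]
    have h1 : (δ - Finsupp.single j k) j = δ j - k := by
      rw [Finsupp.tsub_apply, Finsupp.single_eq_same]
    have h2 : ∀ i ∈ Finset.univ.erase j,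
        X i ^ ((δ - Finsupp.single j k) i) = X (R := ℝ) i ^ δ i := by
      intro i hi
      rw [Finsupp.tsub_apply, Finsupp.single_eq_of_ne' (Ne.symm (Finset.mem_erase.1 hi).1),
        Nat.sub_zero]
    rw [h1, Finset.prod_congr rfl h2]
    have hfac : (t ^ k / (Nat.factorial k : ℝ)) * (c * (Nat.descFactorial (δ j) k : ℝ))
        = c * ((δ j).choose k : ℝ) * t ^ k := by
      rw [Nat.descFactorial_eq_factorial_mul_choose]
      have : (Nat.factorial k : ℝ) ≠ 0 := Nat.cast_ne_zero.2 (Nat.factorial_ne_zero k)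
      field_simp
      push_cast
      ring
    rw [MvPolynomial.algebraMap_eq]
    have hmerge : (C (t ^ k / (Nat.factorial k : ℝ)) : MvPolynomial (Fin s) ℝ)
          * (C (c * ((Nat.descFactorial (δ j) k : ℝ)))
            * (X j ^ (δ j - k) * ∏ x ∈ Finset.univ.erase j, X x ^ δ x))
        = C (c * (((δ j).choose k : ℝ)) * t ^ k)
            * (X j ^ (δ j - k) * ∏ x ∈ Finset.univ.erase j, X x ^ δ x) := by
      rw [← mul_assoc, ← map_mul, hfac]
    rw [hmerge]
    have hC : (C (c * ((δ j).choose k : ℝ) * t ^ k) : MvPolynomial (Fin s) ℝ)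
        = C t ^ k * C c * ((δ j).choose k : MvPolynomial (Fin s) ℝ) := by
      rw [map_mul, map_mul, map_natCast, ← map_pow]
      ring
    rw [hC]
    ring
  · -- vanishing terms
    intro k _ hk
    have hlt : δ j < k := by
      have := Finset.mem_range.1 (show k ∈ Finset.range N from by
        by_contra h
        exact hk (by simp_all))
      by_contra h
      exact hk (Finset.mem_range.2 (by omega))
    rw [DOp_single_monomial j k δ c hc, Nat.descFactorial_eq_zero_iff_lt.2 hlt]
    simp

lemma taylor_sh1 {s : ℕ} (j : Fin s) (t : ℝ) (f : MvPolynomial (Fin s) ℝ) (N : ℕ)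
    (hN : ∀ δ ∈ f.support, δ j < N) :
    MvPolynomial.aeval (sh1 j t) f
      = ∑ k ∈ Finset.range N,
          (t ^ k / (Nat.factorial k : ℝ)) • DOp (Finsupp.single j k) f := by
  conv_lhs => rw [f.as_sum]
  rw [map_sum]
  have hR : ∀ k ∈ Finset.range N,
      (t ^ k / (Nat.factorial k : ℝ)) • DOp (Finsupp.single j k) f
        = ∑ δ ∈ f.support,
            (t ^ k / (Nat.factorial k : ℝ)) •
              DOp (Finsupp.single j k) (monomial δ (coeff δ f)) := by
    intro k _
    rw [← Finset.smul_sum]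
    congr 1
    conv_lhs => rw [f.as_sum]
    exact map_sum (DOpLin (Finsupp.single j k)) _ _
  rw [Finset.sum_congr rfl hR, Finset.sum_comm]
  apply Finset.sum_congr rfl
  intro δ hδ
  exact taylor_monomial j t δ (coeff δ f) (MvPolynomial.mem_support_iff.1 hδ) N (hN δ hδ)

lemma degree_bound_DOp {s : ℕ} (j : Fin s) (β : Fin s →₀ ℕ) (f : MvPolynomial (Fin s) ℝ)
    (N : ℕ) (hN : ∀ δ ∈ f.support, δ j < N) :
    ∀ δ ∈ (DOp β f).support, δ j < N := by
  intro δ hδ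
  have h1 : coeff δ (DOp β f) ≠ 0 := MvPolynomial.mem_support_iff.1 hδ
  rw [coeff_DOp] at h1
  have h2 : coeff (δ + β) f ≠ 0 := fun h => h1 (by rw [h, zero_mul])
  have h3 := hN (δ + β) (MvPolynomial.mem_support_iff.2 h2)
  simp only [Finsupp.add_apply] at h3
  omega

lemma DOp_sh1_comm {s : ℕ} (j : Fin s) (t : ℝ) (β : Fin s →₀ ℕ)
    (f : MvPolynomial (Fin s) ℝ) :
    DOp β (MvPolynomial.aeval (sh1 j t) f) = MvPolynomial.aeval (sh1 j t) (DOp β f) := by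
  set N := MvPolynomial.degreeOf j f + 1 with hNdef
  have hN : ∀ δ ∈ f.support, δ j < N :=
    (MvPolynomial.degreeOf_lt_iff (Nat.succ_pos _)).1 (Nat.lt_succ_self _)
  rw [taylor_sh1 j t f N hN, taylor_sh1 j t (DOp β f) N (degree_bound_DOp j β f N hN)]
  rw [show DOp β = DOpLin (s := s) β from rfl, map_sum]
  apply Finset.sum_congr rfl
  intro k _
  rw [map_smul]
  congr 1
  show DOp β (DOp (Finsupp.single j k) f) = DOp (Finsupp.single j k) (DOp β f)
  exact DOp_comm _ _ _

lemma sh1_mem {s : ℕ} (Q : Submodule ℝ (MvPolynomial (Fin s) ℝ))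
    (hQ : ∀ q : MvPolynomial (Fin s) ℝ, ∀ p ∈ Q, polyD q p ∈ Q)
    (j : Fin s) (t : ℝ) (f : MvPolynomial (Fin s) ℝ) (hf : f ∈ Q) :
    MvPolynomial.aeval (sh1 j t) f ∈ Q := by
  have hN : ∀ δ ∈ f.support, δ j < MvPolynomial.degreeOf j f + 1 :=
    (MvPolynomial.degreeOf_lt_iff (Nat.succ_pos _)).1 (Nat.lt_succ_self _)
  rw [taylor_sh1 j t f _ hN]
  apply Submodule.sum_mem
  intro k _
  apply Submodule.smul_mem
  rw [← polyD_monomial_one]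
  exact hQ _ f hf

noncomputable def shS {s : ℕ} (S : Finset (Fin s)) (y : Fin s → ℝ) : Fin s → MvPolynomial (Fin s) ℝ :=
  fun i => if i ∈ S then X i + C (y i) else X i

lemma shS_empty {s : ℕ} (y : Fin s → ℝ) (f : MvPolynomial (Fin s) ℝ) :
    MvPolynomial.aeval (shS ∅ y) f = f := by
  have : shS (s := s) ∅ y = X := by
    funext i; simp [shS]
  rw [this, aeval_X_left_apply]

lemma shS_insert {s : ℕ} (S : Finset (Fin s)) (j : Fin s) (hj : j ∉ S) (y : Fin s → ℝ)
    (f : MvPolynomial (Fin s) ℝ) :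
    MvPolynomial.aeval (shS (insert j S) y) f
      = MvPolynomial.aeval (sh1 j (y j)) (MvPolynomial.aeval (shS S y) f) := by
  show bind₁ (shS (insert j S) y) f = bind₁ (sh1 j (y j)) (bind₁ (shS S y) f)
  rw [bind₁_bind₁]
  have hfun : (fun i => bind₁ (sh1 j (y j)) (shS S y i)) = shS (insert j S) y := by
    funext i
    by_cases hiS : i ∈ S
    · have hij : i ≠ j := fun h => hj (h ▸ hiS)
      rw [shS, shS]
      simp only [if_pos (Finset.mem_insert_of_mem hiS), if_pos hiS]
      rw [map_add, bind₁_X_right, algHom_C, sh1]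
      simp only [if_neg hij, MvPolynomial.algebraMap_eq]
    · rw [shS, shS]
      simp only [if_neg hiS]
      rw [bind₁_X_right, sh1]
      by_cases hij : i = j
      · subst hij
        rw [if_pos (Finset.mem_insert_self i S), if_pos rfl]
      · rw [if_neg hij, if_neg (by simp [hij, hiS])]
  rw [hfun]

lemma shS_mem {s : ℕ} (Q : Submodule ℝ (MvPolynomial (Fin s) ℝ))
    (hQ : ∀ q : MvPolynomial (Fin s) ℝ, ∀ p ∈ Q, polyD q p ∈ Q)
    (S : Finset (Fin s)) (y : Fin s → ℝ) :
    ∀ f ∈ Q, MvPolynomial.aeval (shS S y) f ∈ Q := by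
  induction S using Finset.induction_on with
  | empty => intro f hf; rw [shS_empty]; exact hf
  | @insert j S hj ih =>
    intro f hf
    rw [shS_insert S j hj]
    exact sh1_mem Q hQ j (y j) _ (ih f hf)

lemma DOp_shS_comm {s : ℕ} (S : Finset (Fin s)) (y : Fin s → ℝ) (β : Fin s →₀ ℕ)
    (f : MvPolynomial (Fin s) ℝ) :
    DOp β (MvPolynomial.aeval (shS S y) f)
      = MvPolynomial.aeval (shS S y) (DOp β f) := by
  induction S using Finset.induction_on with
  | empty => rw [shS_empty, shS_empty]
  | @insert j S hj ih =>
    rw [shS_insert S j hj, shS_insert S j hj, DOp_sh1_comm, ih]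

lemma eval_shS_univ {s : ℕ} (x y : Fin s → ℝ) (f : MvPolynomial (Fin s) ℝ) :
    MvPolynomial.eval x (MvPolynomial.aeval (shS Finset.univ y) f)
      = MvPolynomial.eval (x + y) f := by
  have : (MvPolynomial.eval x).comp
        ((MvPolynomial.aeval (shS Finset.univ y)).toRingHom
          : MvPolynomial (Fin s) ℝ →+* MvPolynomial (Fin s) ℝ)
      = MvPolynomial.eval (x + y) := by
    apply MvPolynomial.ringHom_ext
    · intro r
      simp
    · intro i
      simp only [RingHom.comp_apply, AlgHom.toRingHom_eq_coe, RingHom.coe_coe, aeval_X]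
      rw [shS, if_pos (Finset.mem_univ i)]
      simp
  exact RingHom.congr_fun this f

lemma polyD_shS_comm {s : ℕ} (y : Fin s → ℝ) (g f : MvPolynomial (Fin s) ℝ) :
    polyD g (MvPolynomial.aeval (shS Finset.univ y) f)
      = MvPolynomial.aeval (shS Finset.univ y) (polyD g f) := by
  rw [polyD, polyD, map_sum]
  apply Finset.sum_congr rfl
  intro β _
  rw [map_smul, DOp_shS_comm]

/-- if `q_1,…,q_n` is a Bombieri-orthonormal basis of a finite-dimensional
`D`-invariant subspace `Q`, then every `f ∈ Q` satisfies `f = Σ_i (q_i(D)f)(0)·q_i` and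
`f(x+y) = Σ_i (q_i(D)f)(y)·q_i(x) = Σ_i (q_i(D)f)(x)·q_i(y)`. -/
theorem stmt3 {s n : ℕ} (Q : Submodule ℝ (MvPolynomial (Fin s) ℝ))
    (hQ : DInvariant Q) (q : Fin n → MvPolynomial (Fin s) ℝ)
    (hind : LinearIndependent ℝ q)
    (hspan : Submodule.span ℝ (Set.range q) = Q)
    (horth : ∀ i j, bombieri (q i) (q j) = if i = j then 1 else 0) :
    ∀ f ∈ Q,
      (f = ∑ i, MvPolynomial.eval (0 : Fin s → ℝ) (polyD (q i) f) • q i) ∧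
      ∀ x y : Fin s → ℝ,
        (MvPolynomial.eval (x + y) f
          = ∑ i, MvPolynomial.eval y (polyD (q i) f) * MvPolynomial.eval x (q i)) ∧
        (MvPolynomial.eval (x + y) f
          = ∑ i, MvPolynomial.eval x (polyD (q i) f) * MvPolynomial.eval y (q i)) := by
  intro f hf
  have hf' : f ∈ Submodule.span ℝ (Set.range q) := by rw [hspan]; exact hf
  refine ⟨repr_lemma q horth f hf', ?_⟩
  have main : ∀ x y : Fin s → ℝ,
      MvPolynomial.eval (x + y) f
        = ∑ i, MvPolynomial.eval y (polyD (q i) f) * MvPolynomial.eval x (q i) := by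
    intro x y
    set F := MvPolynomial.aeval (shS Finset.univ y) f with hF
    have hFQ : F ∈ Q := shS_mem Q hQ Finset.univ y f hf
    have hFspan : F ∈ Submodule.span ℝ (Set.range q) := by rw [hspan]; exact hFQ
    have hrep := repr_lemma q horth F hFspan
    calc MvPolynomial.eval (x + y) f = MvPolynomial.eval x F := (eval_shS_univ x y f).symm
      _ = MvPolynomial.eval x (∑ i, MvPolynomial.eval (0 : Fin s → ℝ) (polyD (q i) F) • q i) := by
          rw [← hrep]
      _ = ∑ i, MvPolynomial.eval (0 : Fin s → ℝ) (polyD (q i) F) * MvPolynomial.eval x (q i) := by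
          rw [map_sum]
          apply Finset.sum_congr rfl
          intro i _
          rw [MvPolynomial.smul_eq_C_mul, map_mul, eval_C]
      _ = ∑ i, MvPolynomial.eval y (polyD (q i) f) * MvPolynomial.eval x (q i) := by
          apply Finset.sum_congr rfl
          intro i _
          congr 1
          rw [hF, polyD_shS_comm, eval_shS_univ]
          rw [show (0 : Fin s → ℝ) + y = y from by funext i; simp]
  intro x y
  refine ⟨main x y, ?_⟩
  rw [show x + y = y + x from add_comm x y]
  exact main y x
end

section
/- Let P be a finite-dimensional translation-invariant subspace of ℂ[x_1,…,x_s] with basis p_1,…,p_n. Then there exist unique polynomials g_{ij} ∈ ℂ[y_1,…,y_s] such that p_i(x+y) = Σ_{j=1}^n g_{ij}(y)·p_j(x) for all x, y ∈ ℂ^s, and the polynomial matrix G(y) = (g_{ij}(y)) satisfies det G(y) = 1 for all y ∈ ℂ^s. -/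
open MvPolynomial Matrix

lemma exists_points' {F : Type*} [Field F] {α : Type*} {n : ℕ} (f : Fin n → α → F)
    (hf : LinearIndependent F f) :
    ∃ a : Fin n → α, IsUnit (Matrix.of fun k j => f j (a k)).det := by
  classical
  let ε : α → Module.Dual F (Fin n → F) := fun a =>
    { toFun := fun c => ∑ j, c j * f j a
      map_add' := by intro c d; simp [add_mul, Finset.sum_add_distrib]
      map_smul' := by intro r c; simp [Finset.mul_sum, mul_assoc] }
  have hspan : Submodule.span F (Set.range ε) = ⊤ := by
    apply Submodule.span_eq_top_of_ne_zero
    intro z hz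
    by_contra hc
    push_neg at hc
    apply hz
    have h2 : (∑ j, z j • f j) = 0 := by
      funext b
      have := hc (ε b) ⟨b, rfl⟩
      simpa [ε, Finset.sum_apply] using this
    have h3 := Fintype.linearIndependent_iff.mp hf z h2
    funext j; exact h3 j
  obtain ⟨b, hb_sub, hb_span, hb_ind⟩ := exists_linearIndependent F (Set.range ε)
  rw [hspan] at hb_span
  let B : Module.Basis b F (Module.Dual F (Fin n → F)) :=
    Module.Basis.mk hb_ind (by rw [Subtype.range_coe, hb_span])
  haveI : Fintype b := FiniteDimensional.fintypeBasisIndex B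
  have hcard : Fintype.card b = n := by
    have h1 := Module.finrank_eq_card_basis B
    have h2 : Module.finrank F (Module.Dual F (Fin n → F)) = n := by
      rw [Subspace.dual_finrank_eq]
      simp
    omega
  let e : Fin n ≃ b := (Fintype.equivFinOfCardEq hcard).symm
  let B' : Module.Basis (Fin n) F (Module.Dual F (Fin n → F)) := B.reindex e.symm
  have hB' : ∀ k, ∃ a : α, ε a = B' k := by
    intro k
    have : (B' k : Module.Dual F (Fin n → F)) ∈ b := by
      simp only [B', Module.Basis.reindex_apply, Equiv.symm_symm, B, Module.Basis.mk_apply]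
      exact (e k).2
    exact hb_sub this
  choose a ha using hB'
  refine ⟨a, ?_⟩
  rw [← Matrix.isUnit_iff_isUnit_det]
  rw [← Matrix.mulVec_injective_iff_isUnit]
  intro c c' h
  have key : ∀ φ : Module.Dual F (Fin n → F), φ (c - c') = 0 := by
    intro φ
    have hk : ∀ k, B' k (c - c') = 0 := by
      intro k
      rw [← ha k]
      have hmv : ∑ j, f j (a k) * c j = ∑ j, f j (a k) * c' j := by
        have := congrFun h k
        simpa [Matrix.mulVec, dotProduct] using this
      simp only [ε, LinearMap.coe_mk, AddHom.coe_mk]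
      simp only [Pi.sub_apply, sub_mul]
      rw [Finset.sum_sub_distrib, sub_eq_zero]
      calc ∑ j, c j * f j (a k) = ∑ j, f j (a k) * c j :=
            Finset.sum_congr rfl fun j _ => mul_comm _ _
        _ = ∑ j, f j (a k) * c' j := hmv
        _ = ∑ j, c' j * f j (a k) := Finset.sum_congr rfl fun j _ => mul_comm _ _
    rw [← B'.sum_repr φ]
    simp only [LinearMap.sum_apply, LinearMap.smul_apply, hk, smul_zero, Finset.sum_const_zero]
  have := (Module.forall_dual_apply_eq_zero_iff F (c - c')).mp key
  exact sub_eq_zero.mp this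

lemma eval_aeval' {s : ℕ} (x : Fin s → ℂ) (f : Fin s → MvPolynomial (Fin s) ℂ)
    (q : MvPolynomial (Fin s) ℂ) :
    eval x (aeval f q) = eval (fun l => eval x (f l)) q := by
  rw [aeval_def, eval_eval₂]
  have : ((eval x).comp (C : ℂ →+* MvPolynomial (Fin s) ℂ)) = RingHom.id ℂ := by
    ext c; simp
  rw [show algebraMap ℂ (MvPolynomial (Fin s) ℂ) = C from rfl, this, eval₂_id]

/-- if `p_1,…,p_n` is a basis of a translation-invariant subspace of
`ℂ[x_1,…,x_s]`, then there are unique polynomials `g_{ij}` with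
`p_i(x+y) = Σ_j g_{ij}(y)·p_j(x)`, and `det G(y) = 1` for all `y`. -/
theorem stmt8 {s n : ℕ} (p : Fin n → MvPolynomial (Fin s) ℂ)
    (hind : LinearIndependent ℂ p)
    (hinv : ∀ f ∈ Submodule.span ℂ (Set.range p), ∀ y : Fin s → ℂ,
      MvPolynomial.aeval (fun j => MvPolynomial.X j + MvPolynomial.C (y j)) f
        ∈ Submodule.span ℂ (Set.range p)) :
    ∃ g : Fin n → Fin n → MvPolynomial (Fin s) ℂ,
      (∀ (i : Fin n) (x y : Fin s → ℂ),
        MvPolynomial.eval (x + y) (p i)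
          = ∑ j, MvPolynomial.eval y (g i j) * MvPolynomial.eval x (p j)) ∧
      (∀ g' : Fin n → Fin n → MvPolynomial (Fin s) ℂ,
        (∀ (i : Fin n) (x y : Fin s → ℂ),
          MvPolynomial.eval (x + y) (p i)
            = ∑ j, MvPolynomial.eval y (g' i j) * MvPolynomial.eval x (p j)) → g' = g) ∧
      (∀ y : Fin s → ℂ,
        Matrix.det (Matrix.of fun i j => MvPolynomial.eval y (g i j)) = 1) := by
  classical
  let E : MvPolynomial (Fin s) ℂ →ₗ[ℂ] ((Fin s → ℂ) → ℂ) :=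
    { toFun := fun q x => eval x q
      map_add' := fun q r => funext fun x => by simp
      map_smul' := fun c q => funext fun x => by simp [smul_eval] }
  have hEinj : LinearMap.ker E = ⊥ := by
    rw [LinearMap.ker_eq_bot]
    intro q r h
    exact MvPolynomial.funext fun x => congrFun h x
  have hind2 : LinearIndependent ℂ (fun j (x : Fin s → ℂ) => eval x (p j)) :=
    hind.map' E hEinj
  have huniq : ∀ u v : Fin n → ℂ,
      (∀ x, ∑ j, u j * eval x (p j) = ∑ j, v j * eval x (p j)) → u = v := by
    intro u v h
    have h2 : (∑ j, (u j - v j) • fun x => eval x (p j)) = (0 : (Fin s → ℂ) → ℂ) := by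
      funext x
      simp only [Finset.sum_apply, Pi.smul_apply, smul_eq_mul, Pi.zero_apply, sub_mul]
      rw [Finset.sum_sub_distrib, h x, sub_self]
    have h3 := Fintype.linearIndependent_iff.mp hind2 (fun j => u j - v j) h2
    funext j
    exact sub_eq_zero.mp (h3 j)
  have hcoef : ∀ (i : Fin n) (y : Fin s → ℂ), ∃ c : Fin n → ℂ,
      ∀ x, eval (x + y) (p i) = ∑ j, c j * eval x (p j) := by
    intro i y
    have hm := hinv (p i) (Submodule.subset_span ⟨i, rfl⟩) y
    rw [Submodule.mem_span_range_iff_exists_fun] at hm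
    obtain ⟨c, hc⟩ := hm
    refine ⟨c, fun x => ?_⟩
    have h1 : eval x (aeval (fun j => X j + C (y j)) (p i)) = eval (x + y) (p i) := by
      rw [eval_aeval']
      have hxy : (fun l => eval x (X l + C (y l))) = x + y := by
        funext l; simp
      rw [hxy]
    rw [← h1, ← hc]
    simp [smul_eval]
  obtain ⟨a, hA⟩ := exists_points' (fun j (x : Fin s → ℂ) => eval x (p j)) hind2
  set A : Matrix (Fin n) (Fin n) ℂ := Matrix.of (fun k j => eval (a k) (p j)) with hAdef
  set g : Fin n → Fin n → MvPolynomial (Fin s) ℂ := fun i j =>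
    ∑ k, MvPolynomial.C (A⁻¹ j k) * aeval (fun l => X l + C (a k l)) (p i) with hgdef
  have hg_eval : ∀ (i : Fin n) (y : Fin s → ℂ) (c : Fin n → ℂ),
      (∀ x, eval (x + y) (p i) = ∑ j, c j * eval x (p j)) →
      ∀ j, eval y (g i j) = c j := by
    intro i y c hc j
    have h1 : eval y (g i j) = ∑ k, A⁻¹ j k * eval (a k + y) (p i) := by
      rw [hgdef, map_sum]
      refine Finset.sum_congr rfl fun k _ => ?_
      rw [_root_.map_mul, eval_C, eval_aeval']
      have hxy : (fun l => eval y (X l + C (a k l))) = a k + y := by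
        funext l; simp [add_comm]
      rw [hxy]
    have h2 : ∀ k, eval (a k + y) (p i) = (A *ᵥ c) k := by
      intro k
      rw [hc (a k)]
      simp only [Matrix.mulVec, dotProduct, hAdef, Matrix.of_apply]
      exact Finset.sum_congr rfl fun j _ => mul_comm _ _
    have h3 : ∑ k, A⁻¹ j k * eval (a k + y) (p i) = (A⁻¹ *ᵥ (A *ᵥ c)) j := by
      simp only [Matrix.mulVec, dotProduct]
      exact Finset.sum_congr rfl fun k _ => by rw [h2 k]; rfl
    rw [h1, h3, Matrix.mulVec_mulVec, Matrix.nonsing_inv_mul A hA, Matrix.one_mulVec]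
  have hmain : ∀ (i : Fin n) (x y : Fin s → ℂ),
      eval (x + y) (p i) = ∑ j, eval y (g i j) * eval x (p j) := by
    intro i x y
    obtain ⟨c, hc⟩ := hcoef i y
    rw [hc x]
    exact Finset.sum_congr rfl fun j _ => by rw [hg_eval i y c hc j]
  -- uniqueness of expansions against g
  have hexp_uniq : ∀ (i : Fin n) (y : Fin s → ℂ) (c : Fin n → ℂ),
      (∀ x, eval (x + y) (p i) = ∑ j, c j * eval x (p j)) →
      (fun j => eval y (g i j)) = c := by
    intro i y c hc
    funext j; exact hg_eval i y c hc j
  refine ⟨g, hmain, ?_, ?_⟩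
  · intro g' hg'
    funext i j
    apply MvPolynomial.funext
    intro y
    have := huniq (fun j => eval y (g' i j)) (fun j => eval y (g i j))
      (fun x => by rw [← hg' i x y, ← hmain i x y])
    exact congrFun this j
  · -- determinant part
    set Gm : (Fin s → ℂ) → Matrix (Fin n) (Fin n) ℂ :=
      fun y => Matrix.of fun i j => eval y (g i j) with hGm
    have hG0 : Gm 0 = 1 := by
      ext i j
      have hc0 : ∀ x : Fin s → ℂ,
          eval (x + 0) (p i) = ∑ j, (if i = j then (1:ℂ) else 0) * eval x (p j) := by
        intro x
        simp [add_zero, Finset.sum_ite_eq, eq_comm]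
      have := hg_eval i 0 (fun j => if i = j then 1 else 0) hc0 j
      simpa [Gm, Matrix.one_apply] using this
    have hGmul : ∀ y z : Fin s → ℂ, Gm (y + z) = Gm z * Gm y := by
      intro y z
      ext i k
      have hc : ∀ x : Fin s → ℂ, eval (x + (y + z)) (p i)
          = ∑ k', (∑ j, eval z (g i j) * eval y (g j k')) * eval x (p k') := by
        intro x
        have e1 : x + (y + z) = (x + y) + z := by rw [add_assoc]
        rw [e1, hmain i (x+y) z]
        have e2 : ∀ j, eval z (g i j) * eval (x + y) (p j)
            = ∑ k', eval z (g i j) * (eval y (g j k') * eval x (p k')) := by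
          intro j
          rw [hmain j x y, Finset.mul_sum]
        rw [Finset.sum_congr rfl fun j _ => e2 j, Finset.sum_comm]
        refine Finset.sum_congr rfl fun k' _ => ?_
        rw [Finset.sum_mul]
        exact Finset.sum_congr rfl fun j _ => by ring
      have := hg_eval i (y + z) _ hc k
      simpa [Gm, Matrix.mul_apply] using this
    have hdet0 : (Gm 0).det = 1 := by rw [hG0, Matrix.det_one]
    have hdet_ne : ∀ y, (Gm y).det ≠ 0 := by
      intro y h0
      have h1 : (Gm (y + -y)).det = (Gm (-y)).det * (Gm y).det := by
        rw [hGmul, Matrix.det_mul]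
      rw [add_neg_cancel, hdet0, h0, mul_zero] at h1
      exact one_ne_zero h1
    set Dp : MvPolynomial (Fin s) ℂ := (Matrix.of fun i j => g i j).det with hDp
    have hDeval : ∀ w, eval w Dp = (Gm w).det := by
      intro w
      rw [hDp, RingHom.map_det]
      congr 1
    intro y
    set q : Polynomial ℂ :=
      MvPolynomial.aeval (fun i => Polynomial.C (y i) * Polynomial.X) Dp with hq
    have hqt : ∀ t : ℂ, q.eval t = eval (fun i => y i * t) Dp := by
      intro t
      have hcl := MvPolynomial.eval₂_comp_left (Polynomial.evalRingHom t)
        (Polynomial.C : ℂ →+* Polynomial ℂ)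
        (fun i : Fin s => Polynomial.C (y i) * Polynomial.X) Dp
      have e0 : (Polynomial.evalRingHom t).comp (Polynomial.C : ℂ →+* Polynomial ℂ)
          = RingHom.id ℂ := by ext c; simp
      rw [e0] at hcl
      have e1 : ((Polynomial.evalRingHom t) ∘ fun i : Fin s => Polynomial.C (y i) * Polynomial.X)
          = fun i => y i * t := by funext i; simp
      rw [e1] at hcl
      rw [hq, aeval_def]
      rw [show (algebraMap ℂ (Polynomial ℂ)) = Polynomial.C from rfl]
      calc Polynomial.eval t (eval₂ Polynomial.C (fun i => Polynomial.C (y i) * Polynomial.X) Dp)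
          = (Polynomial.evalRingHom t) (eval₂ Polynomial.C (fun i => Polynomial.C (y i) * Polynomial.X) Dp) := rfl
        _ = eval₂ (RingHom.id ℂ) (fun i => y i * t) Dp := hcl
        _ = eval (fun i => y i * t) Dp := eval₂_id _
    have hq0 : q.eval 0 = 1 := by
      rw [hqt 0]
      have e : (fun i : Fin s => y i * (0:ℂ)) = (0 : Fin s → ℂ) := by funext i; simp
      rw [e, hDeval, hdet0]
    have hqne : ∀ t, q.eval t ≠ 0 := fun t => by rw [hqt t, hDeval]; exact hdet_ne _
    have hdeg : q.degree ≤ 0 := by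
      by_contra hdg
      push_neg at hdg
      obtain ⟨z, hz⟩ := IsAlgClosed.exists_root q (fun h => by rw [h] at hdg; exact lt_irrefl _ hdg)
      exact hqne z hz
    have hqC : q = Polynomial.C (q.coeff 0) := Polynomial.eq_C_of_degree_le_zero hdeg
    have h1 : q.eval 1 = q.eval 0 := by rw [hqC]; simp
    have h2 : (Gm y).det = q.eval 1 := by
      rw [hqt 1]
      have e : (fun i : Fin s => y i * (1:ℂ)) = y := by funext i; simp
      rw [e, hDeval]
    calc (Matrix.of fun i j => eval y (g i j)).det = (Gm y).det := rfl
      _ = q.eval 1 := h2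
      _ = q.eval 0 := h1
      _ = 1 := hq0
end

section
/- Let Ξ ∈ ℤ^{s×s} be an expanding integer matrix and a : ℤ^s → ℂ finitely supported. Then ζ ∈ (ℂ∖{0})^s is a symmetric zero of a* if and only if ζ^Ξ is a common zero of all subsymbols, i.e. a_ξ*(ζ^Ξ) = 0 for every ξ ∈ E_Ξ. -/
open scoped Matrix

/-- The set `E_Ξ = Ξ[0,1)^s ∩ ℤ^s` of coset representatives of `ℤ^s / Ξℤ^s`. -/
def EXi {s : ℕ} (Ξ : Matrix (Fin s) (Fin s) ℤ) : Set (Fin s → ℤ) :=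
  {ξ | ∃ t : Fin s → ℝ, (∀ j, 0 ≤ t j ∧ t j < 1) ∧
    (fun j => (ξ j : ℝ)) = (Ξ.map (Int.cast : ℤ → ℝ)).mulVec t}

/-- A matrix `Ξ ∈ ℤ^{s×s}` is expanding if all its complex eigenvalues have modulus
greater than one. -/
def Expanding {s : ℕ} (Ξ : Matrix (Fin s) (Fin s) ℤ) : Prop :=
  ∀ μ : ℂ, (Matrix.charpoly (Ξ.map (Int.cast : ℤ → ℂ))).IsRoot μ → 1 < ‖μ‖

/-- The subdivision operator `(S_a c)(α) = Σ_β a(α − Ξβ) c(β)`. -/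
noncomputable def subdiv {s : ℕ} (Ξ : Matrix (Fin s) (Fin s) ℤ)
    (a : (Fin s → ℤ) →₀ ℂ) (c : (Fin s → ℤ) → ℂ) (α : Fin s → ℤ) : ℂ :=
  ∑ᶠ β : Fin s → ℤ, a (α - Ξ.mulVec β) * c β

/-- Convolution `(h*c)(α) = Σ_β h(β) c(α−β)` for a (finitely supported) sequence `h`. -/
noncomputable def convF {s : ℕ} (h c : (Fin s → ℤ) → ℂ) (α : Fin s → ℤ) : ℂ :=
  ∑ᶠ β : Fin s → ℤ, h β * c (α - β)

/-- `z^Ξ = (z^{ξ_1},…,z^{ξ_s})`, `ξ_j` the columns of `Ξ`. -/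
noncomputable def powXi {s : ℕ} (Ξ : Matrix (Fin s) (Fin s) ℤ) (z : Fin s → ℂ) :
    Fin s → ℂ :=
  fun j => ∏ i, z i ^ Ξ i j

/-- The vector `e^{−2πiΞ^{−T}ξ'}`. -/
noncomputable def rootvec {s : ℕ} (Ξ : Matrix (Fin s) (Fin s) ℤ) (ξ' : Fin s → ℤ) :
    Fin s → ℂ :=
  fun j => Complex.exp (-2 * (Real.pi : ℂ) * Complex.I *
    ((((Ξ.map (Int.cast : ℤ → ℝ)).transpose⁻¹.mulVec fun i => (ξ' i : ℝ)) j : ℝ)))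

/-- The symbol `a*(z) = Σ_α a(α) z^α` as a function on `(ℂ∖{0})^s`. -/
noncomputable def astar {s : ℕ} (a : (Fin s → ℤ) →₀ ℂ) (z : Fin s → ℂ) : ℂ :=
  a.sum fun α v => v * ∏ j, z j ^ α j

/-- The subsymbol `a_ξ*(z) = Σ_γ a(ξ + Ξγ) z^γ` as a function on `(ℂ∖{0})^s`. -/
noncomputable def asubF {s : ℕ} (Ξ : Matrix (Fin s) (Fin s) ℤ)
    (a : (Fin s → ℤ) →₀ ℂ) (ξ : Fin s → ℤ) (z : Fin s → ℂ) : ℂ :=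
  ∑ᶠ γ : Fin s → ℤ, a (ξ + Ξ.mulVec γ) * ∏ j, z j ^ γ j

/-- The exponential sequence `e_θ(α) = θ^α`. -/
noncomputable def eSeq {s : ℕ} (θ : Fin s → ℂ) (α : Fin s → ℤ) : ℂ :=
  ∏ j, θ j ^ α j

/-- The partial derivative `∂/∂z_j` of a function `(Fin s → ℂ) → ℂ`. -/
noncomputable def pd {s : ℕ} (j : Fin s) (f : (Fin s → ℂ) → ℂ) : (Fin s → ℂ) → ℂ :=
  fun z => fderiv ℂ f z (Pi.single j 1)

/-- The iterated partial derivative `∂^{|β|}/∂z^β` of a function `(Fin s → ℂ) → ℂ`. -/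
noncomputable def pdMulti {s : ℕ} (β : Fin s → ℕ) (f : (Fin s → ℂ) → ℂ) :
    (Fin s → ℂ) → ℂ :=
  (List.ofFn fun j => (pd j)^[β j]).foldr (· ∘ ·) id f

namespace Stmt15Aux

variable {s : ℕ}

/-- real cast of an integer matrix -/
noncomputable def Mr (M : Matrix (Fin s) (Fin s) ℤ) : Matrix (Fin s) (Fin s) ℝ :=
  M.map (Int.cast : ℤ → ℝ)

noncomputable def tvec (M : Matrix (Fin s) (Fin s) ℤ) (α : Fin s → ℤ) : Fin s → ℝ :=
  (Mr M)⁻¹.mulVec (fun i => (α i : ℝ))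

noncomputable def gam (M : Matrix (Fin s) (Fin s) ℤ) (α : Fin s → ℤ) : Fin s → ℤ :=
  fun j => ⌊tvec M α j⌋

noncomputable def rho (M : Matrix (Fin s) (Fin s) ℤ) (α : Fin s → ℤ) : Fin s → ℤ :=
  α - M.mulVec (gam M α)

lemma cast_mulVec (M : Matrix (Fin s) (Fin s) ℤ) (γ : Fin s → ℤ) :
    (fun j => ((M.mulVec γ) j : ℝ)) = (Mr M).mulVec (fun j => (γ j : ℝ)) := by
  funext j
  simp [Matrix.mulVec, dotProduct, Mr]

variable {M : Matrix (Fin s) (Fin s) ℤ}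

lemma tvec_spec (hdet : (Mr M).det ≠ 0) (α : Fin s → ℤ) :
    (Mr M).mulVec (tvec M α) = (fun i => (α i : ℝ)) := by
  rw [tvec, Matrix.mulVec_mulVec, Matrix.mul_nonsing_inv _ (isUnit_iff_ne_zero.2 hdet),
    Matrix.one_mulVec]

lemma tvec_mulVec (hdet : (Mr M).det ≠ 0) (γ : Fin s → ℤ) :
    tvec M (M.mulVec γ) = fun i => (γ i : ℝ) := by
  rw [tvec, cast_mulVec, Matrix.mulVec_mulVec,
    Matrix.nonsing_inv_mul _ (isUnit_iff_ne_zero.2 hdet), Matrix.one_mulVec]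

lemma tvec_add (α β : Fin s → ℤ) : tvec M (α + β) = tvec M α + tvec M β := by
  have h : (fun i => (((α + β) i : ℤ) : ℝ)) = (fun i => ((α i : ℤ) : ℝ)) + fun i => ((β i : ℤ) : ℝ) := by
    funext i; simp [Pi.add_apply]
  rw [tvec, h, Matrix.mulVec_add]; rfl

lemma tvec_sub (α β : Fin s → ℤ) : tvec M (α - β) = tvec M α - tvec M β := by
  have h : (fun i => (((α - β) i : ℤ) : ℝ)) = (fun i => ((α i : ℤ) : ℝ)) - fun i => ((β i : ℤ) : ℝ) := by
    funext i; simp [Pi.sub_apply]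
  rw [tvec, h, Matrix.mulVec_sub]; rfl


lemma tvec_add_mulVec (hdet : (Mr M).det ≠ 0) (α γ : Fin s → ℤ) :
    tvec M (α + M.mulVec γ) = tvec M α + fun i => (γ i : ℝ) := by
  rw [tvec_add, tvec_mulVec hdet]

lemma mem_EXi_iff (hdet : (Mr M).det ≠ 0) (ξ : Fin s → ℤ) :
    ξ ∈ EXi M ↔ ∀ j, 0 ≤ tvec M ξ j ∧ tvec M ξ j < 1 := by
  constructor
  · rintro ⟨t, ht, hξ⟩
    have : tvec M ξ = t := by
      rw [tvec, show (fun i => ((ξ i : ℤ) : ℝ)) = (Mr M).mulVec t from hξ,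
        Matrix.mulVec_mulVec, Matrix.nonsing_inv_mul _ (isUnit_iff_ne_zero.2 hdet),
        Matrix.one_mulVec]
    rw [this]; exact ht
  · intro h
    exact ⟨tvec M ξ, h, (tvec_spec hdet ξ).symm⟩

lemma rho_mem (hdet : (Mr M).det ≠ 0) (α : Fin s → ℤ) : rho M α ∈ EXi M := by
  rw [mem_EXi_iff hdet]
  intro j
  have h1 : tvec M (rho M α) = tvec M α - fun i => ((gam M α i : ℤ) : ℝ) := by
    rw [rho, tvec_sub, tvec_mulVec hdet]
  have h2 : tvec M (rho M α) j = Int.fract (tvec M α j) := by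
    rw [h1, Pi.sub_apply, Int.fract]; rfl
  rw [h2]
  exact ⟨Int.fract_nonneg _, Int.fract_lt_one _⟩

lemma gam_eq_zero_of_mem (hdet : (Mr M).det ≠ 0) {ξ : Fin s → ℤ} (hξ : ξ ∈ EXi M) :
    gam M ξ = 0 := by
  rw [mem_EXi_iff hdet] at hξ
  funext j
  exact Int.floor_eq_zero_iff.2 ⟨(hξ j).1, (hξ j).2⟩

lemma rho_eq_of_mem (hdet : (Mr M).det ≠ 0) {ξ : Fin s → ℤ} (hξ : ξ ∈ EXi M) :
    rho M ξ = ξ := by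
  rw [rho, gam_eq_zero_of_mem hdet hξ]
  simp

lemma gam_add_mulVec (hdet : (Mr M).det ≠ 0) (α γ : Fin s → ℤ) :
    gam M (α + M.mulVec γ) = gam M α + γ := by
  funext j
  have : tvec M (α + M.mulVec γ) j = tvec M α j + (γ j : ℝ) := by
    rw [tvec_add_mulVec hdet]; rfl
  rw [gam, this]
  exact Int.floor_add_intCast (tvec M α j) (γ j)

lemma rho_add_mulVec (hdet : (Mr M).det ≠ 0) (α γ : Fin s → ℤ) :
    rho M (α + M.mulVec γ) = rho M α := by
  rw [rho, rho, gam_add_mulVec hdet]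
  have : M.mulVec (gam M α + γ) = M.mulVec (gam M α) + M.mulVec γ := Matrix.mulVec_add ..
  rw [this]; abel

lemma rho_add_self (α : Fin s → ℤ) : rho M α + M.mulVec (gam M α) = α := by
  rw [rho]; abel

lemma mulVec_injective (hdet : (Mr M).det ≠ 0) {γ γ' : Fin s → ℤ}
    (h : M.mulVec γ = M.mulVec γ') : γ = γ' := by
  have h2 : tvec M (M.mulVec γ) = tvec M (M.mulVec γ') := by rw [h]
  rw [tvec_mulVec hdet, tvec_mulVec hdet] at h2
  funext i
  exact_mod_cast congrFun h2 i

lemma gam_mem_add_mulVec (hdet : (Mr M).det ≠ 0) {ξ : Fin s → ℤ} (hξ : ξ ∈ EXi M)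
    (γ : Fin s → ℤ) : gam M (ξ + M.mulVec γ) = γ := by
  rw [gam_add_mulVec hdet, gam_eq_zero_of_mem hdet hξ, zero_add]

lemma EXi_finite (M : Matrix (Fin s) (Fin s) ℤ) : (EXi M).Finite := by
  have hsub : EXi M ⊆ Set.pi Set.univ (fun j => Set.Icc (-(∑ i, |M j i|)) (∑ i, |M j i|)) := by
    rintro ξ ⟨t, ht, hξ⟩
    intro j _
    have h1 : ((ξ j : ℤ) : ℝ) = ∑ i, (M j i : ℝ) * t i := by
      have := congrFun hξ j
      simpa [Matrix.mulVec, dotProduct] using this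
    have h2 : |((ξ j : ℤ) : ℝ)| ≤ ∑ i, |(M j i : ℝ)| := by
      rw [h1]
      refine (Finset.abs_sum_le_sum_abs _ _).trans (Finset.sum_le_sum fun i _ => ?_)
      rw [abs_mul]
      have : |t i| ≤ 1 := by
        rw [abs_le]; exact ⟨by linarith [(ht i).1], le_of_lt (ht i).2⟩
      calc |(M j i : ℝ)| * |t i| ≤ |(M j i : ℝ)| * 1 :=
            mul_le_mul_of_nonneg_left this (abs_nonneg _)
        _ = |(M j i : ℝ)| := mul_one _
    have h3 : |ξ j| ≤ ∑ i, |M j i| := by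
      have : ((|ξ j| : ℤ) : ℝ) ≤ ((∑ i, |M j i| : ℤ) : ℝ) := by push_cast; exact h2
      exact_mod_cast this
    simp only [Set.mem_Icc]
    constructor
    · linarith [neg_abs_le (ξ j)]
    · linarith [le_abs_self (ξ j)]
  exact Set.Finite.subset (Set.Finite.pi fun j => Set.finite_Icc _ _) hsub

lemma zero_mem_EXi (M : Matrix (Fin s) (Fin s) ℤ) : (0 : Fin s → ℤ) ∈ EXi M := by
  refine ⟨0, fun j => ⟨le_refl _, zero_lt_one⟩, ?_⟩
  rw [Matrix.mulVec_zero]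
  funext j; simp


/-! ### zpow machinery -/

lemma zpow_finset_sum {G : Type*} [CommGroup G] (x : G) {ι : Type*} (t : Finset ι)
    (f : ι → ℤ) : x ^ (∑ i ∈ t, f i) = ∏ i ∈ t, x ^ f i := by
  induction t using Finset.cons_induction with
  | empty => simp
  | cons a t ha ih => rw [Finset.sum_cons, Finset.prod_cons, zpow_add, ih]

lemma prod_zpow_mulVec (u : Fin s → ℂˣ) (M : Matrix (Fin s) (Fin s) ℤ) (γ : Fin s → ℤ) :
    ∏ j, (∏ i, u i ^ M i j) ^ γ j = ∏ i, u i ^ (M.mulVec γ i) := by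
  have h1 : ∀ j, (∏ i, u i ^ M i j) ^ γ j = ∏ i, u i ^ (M i j * γ j) := by
    intro j
    rw [← Finset.prod_zpow]
    exact Finset.prod_congr rfl fun i _ => (zpow_mul (u i) (M i j) (γ j)).symm
  calc ∏ j, (∏ i, u i ^ M i j) ^ γ j = ∏ j, ∏ i, u i ^ (M i j * γ j) :=
        Finset.prod_congr rfl fun j _ => h1 j
    _ = ∏ i, ∏ j, u i ^ (M i j * γ j) := Finset.prod_comm
    _ = ∏ i, u i ^ (M.mulVec γ i) := by
        refine Finset.prod_congr rfl fun i _ => ?_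
        rw [← zpow_finset_sum]
        rfl

noncomputable def uvec (z : Fin s → ℂ) (hz : ∀ j, z j ≠ 0) : Fin s → ℂˣ :=
  fun j => Units.mk0 (z j) (hz j)

lemma eSeq_eq_units (z : Fin s → ℂ) (hz : ∀ j, z j ≠ 0) (α : Fin s → ℤ) :
    eSeq z α = ↑(∏ j, uvec z hz j ^ α j) := by
  rw [eSeq, Units.coe_prod]
  exact Finset.prod_congr rfl fun j _ => by
    rw [Units.val_zpow_eq_zpow_val]; rfl

lemma powXi_eq_units (M : Matrix (Fin s) (Fin s) ℤ) (z : Fin s → ℂ) (hz : ∀ j, z j ≠ 0)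
    (j : Fin s) : powXi M z j = ↑(∏ i, uvec z hz i ^ M i j) := by
  rw [powXi, Units.coe_prod]
  exact Finset.prod_congr rfl fun i _ => by
    rw [Units.val_zpow_eq_zpow_val]; rfl

lemma eSeq_add_mulVec (M : Matrix (Fin s) (Fin s) ℤ) (z : Fin s → ℂ) (hz : ∀ j, z j ≠ 0)
    (ξ γ : Fin s → ℤ) :
    eSeq z (ξ + M.mulVec γ) = eSeq z ξ * ∏ j, (powXi M z j) ^ γ j := by
  have h1 : ∏ j, (powXi M z j) ^ γ j = ↑(∏ j, (∏ i, uvec z hz i ^ M i j) ^ γ j) := by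
    rw [Units.coe_prod]
    refine Finset.prod_congr rfl fun j _ => ?_
    rw [Units.val_zpow_eq_zpow_val, powXi_eq_units M z hz j]
  rw [h1, prod_zpow_mulVec, eSeq_eq_units z hz, eSeq_eq_units z hz, ← Units.val_mul]
  congr 1
  rw [← Finset.prod_mul_distrib]
  refine Finset.prod_congr rfl fun j _ => ?_
  rw [← zpow_add]
  rfl

lemma eSeq_ne_zero (z : Fin s → ℂ) (hz : ∀ j, z j ≠ 0) (α : Fin s → ℤ) :
    eSeq z α ≠ 0 := by
  rw [eSeq_eq_units z hz]
  exact Units.ne_zero _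

/-! ### symbol decomposition -/

lemma asubF_eq_sum {M : Matrix (Fin s) (Fin s) ℤ} (hdet : (Mr M).det ≠ 0)
    (a : (Fin s → ℤ) →₀ ℂ) {ξ : Fin s → ℤ} (hξ : ξ ∈ EXi M) (w : Fin s → ℂ) :
    asubF M a ξ w = ∑ γ ∈ a.support.image (gam M),
      a (ξ + M.mulVec γ) * ∏ j, w j ^ γ j := by
  refine finsum_eq_sum_of_support_subset _ ?_
  intro γ hγ
  have ha : a (ξ + M.mulVec γ) ≠ 0 := by
    intro h
    apply hγ
    simp [h]
  simp only [Finset.coe_image, Set.mem_image, Finset.mem_coe, Finsupp.mem_support_iff]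
  exact ⟨ξ + M.mulVec γ, ha, gam_mem_add_mulVec hdet hξ γ⟩

lemma astar_decomp {M : Matrix (Fin s) (Fin s) ℤ} (hdet : (Mr M).det ≠ 0)
    (a : (Fin s → ℤ) →₀ ℂ) (z : Fin s → ℂ) (hz : ∀ j, z j ≠ 0) :
    astar a z = ∑ ξ ∈ (EXi_finite M).toFinset, eSeq z ξ * asubF M a ξ (powXi M z) := by
  classical
  set E := (EXi_finite M).toFinset with hE
  set Γ := a.support.image (gam M) with hΓ
  set g : (Fin s → ℤ) → ℂ := fun α => a α * eSeq z α with hg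
  have step1 : ∀ ξ ∈ E, eSeq z ξ * asubF M a ξ (powXi M z)
      = ∑ γ ∈ Γ, g (ξ + M.mulVec γ) := by
    intro ξ hξ
    have hξ' : ξ ∈ EXi M := (Set.Finite.mem_toFinset _).1 hξ
    rw [asubF_eq_sum hdet a hξ', Finset.mul_sum]
    refine Finset.sum_congr rfl fun γ _ => ?_
    rw [hg]
    simp only
    rw [eSeq_add_mulVec M z hz]
    ring
  rw [Finset.sum_congr rfl step1, ← Finset.sum_product']
  have hinj : Set.InjOn (fun p : (Fin s → ℤ) × (Fin s → ℤ) => p.1 + M.mulVec p.2)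
      ↑(E ×ˢ Γ) := by
    rintro ⟨ξ₁, γ₁⟩ h₁ ⟨ξ₂, γ₂⟩ h₂ h
    simp only [Finset.coe_product, Set.mem_prod, Finset.mem_coe] at h₁ h₂
    have hm₁ : ξ₁ ∈ EXi M := (Set.Finite.mem_toFinset _).1 h₁.1
    have hm₂ : ξ₂ ∈ EXi M := (Set.Finite.mem_toFinset _).1 h₂.1
    simp only at h
    have hξ : ξ₁ = ξ₂ := by
      have e1 : rho M (ξ₁ + M.mulVec γ₁) = ξ₁ := by
        rw [rho_add_mulVec hdet, rho_eq_of_mem hdet hm₁]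
      have e2 : rho M (ξ₂ + M.mulVec γ₂) = ξ₂ := by
        rw [rho_add_mulVec hdet, rho_eq_of_mem hdet hm₂]
      rw [← e1, ← e2, h]
    have hγ : γ₁ = γ₂ := by
      apply mulVec_injective hdet
      have := h
      rw [hξ] at this
      exact add_left_cancel this
    simp [hξ, hγ, Prod.ext_iff]
  have himage : ∑ p ∈ E ×ˢ Γ, g (p.1 + M.mulVec p.2)
      = ∑ α ∈ (E ×ˢ Γ).image (fun p => p.1 + M.mulVec p.2), g α := by
    rw [Finset.sum_image]
    intro p hp q hq h
    exact hinj (Finset.mem_coe.2 hp) (Finset.mem_coe.2 hq) h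
  rw [himage]
  have hsub : a.support ⊆ (E ×ˢ Γ).image (fun p => p.1 + M.mulVec p.2) := by
    intro α hα
    refine Finset.mem_image.2 ⟨(rho M α, gam M α), ?_, rho_add_self α⟩
    rw [Finset.mem_product]
    exact ⟨(Set.Finite.mem_toFinset _).2 (rho_mem hdet α), Finset.mem_image_of_mem _ hα⟩
  rw [← Finset.sum_subset hsub (fun α _ hα => by
    simp only [hg, Finsupp.notMem_support_iff.1 hα, zero_mul])]
  rw [astar, Finsupp.sum]
  rfl


/-! ### characters and orthogonality -/

noncomputable def bil (M : Matrix (Fin s) (Fin s) ℤ) (x y : Fin s → ℤ) : ℝ :=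
  ∑ i, tvec Mᵀ x i * (y i : ℝ)

noncomputable def chr (M : Matrix (Fin s) (Fin s) ℤ) (x y : Fin s → ℤ) : ℂ :=
  Complex.exp (-2 * (Real.pi : ℂ) * Complex.I * ((bil M x y : ℝ) : ℂ))

variable {M : Matrix (Fin s) (Fin s) ℤ}

lemma Mr_transpose : Mr (Mᵀ) = (Mr M)ᵀ := Matrix.transpose_map

lemma detT (hdet : (Mr M).det ≠ 0) : (Mr (Mᵀ)).det ≠ 0 := by
  rw [Mr_transpose, Matrix.det_transpose]; exact hdet

lemma bil_add_left (hdet : (Mr M).det ≠ 0) (x x' y : Fin s → ℤ) :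
    bil M (x + x') y = bil M x y + bil M x' y := by
  simp only [bil, tvec_add, Pi.add_apply, add_mul, Finset.sum_add_distrib]

lemma bil_sub_right (x y y' : Fin s → ℤ) :
    bil M x (y - y') = bil M x y - bil M x y' := by
  simp only [bil, Pi.sub_apply, Int.cast_sub, mul_sub, Finset.sum_sub_distrib]

lemma bil_swap (hdet : (Mr M).det ≠ 0) (x y : Fin s → ℤ) :
    bil M x y = ∑ j, (x j : ℝ) * tvec M y j := by
  have hx : (fun i => ((x i : ℤ) : ℝ)) = (Mr Mᵀ).mulVec (tvec Mᵀ x) :=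
    (tvec_spec (detT hdet) x).symm
  have hy : (fun i => ((y i : ℤ) : ℝ)) = (Mr M).mulVec (tvec M y) :=
    (tvec_spec hdet y).symm
  calc bil M x y = ∑ i, tvec Mᵀ x i * ((Mr M).mulVec (tvec M y)) i := by
        rw [bil]
        refine Finset.sum_congr rfl fun i _ => ?_
        rw [show ((y i : ℤ) : ℝ) = ((Mr M).mulVec (tvec M y)) i from congrFun hy i]
    _ = ∑ i, ∑ j, tvec Mᵀ x i * ((Mr M) i j * tvec M y j) := by
        refine Finset.sum_congr rfl fun i _ => ?_
        rw [Matrix.mulVec, dotProduct, Finset.mul_sum]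
    _ = ∑ j, ∑ i, tvec Mᵀ x i * ((Mr M) i j * tvec M y j) := Finset.sum_comm
    _ = ∑ j, ((Mr Mᵀ).mulVec (tvec Mᵀ x)) j * tvec M y j := by
        refine Finset.sum_congr rfl fun j _ => ?_
        rw [Matrix.mulVec, dotProduct, Finset.sum_mul]
        refine Finset.sum_congr rfl fun i _ => ?_
        rw [Mr_transpose, Matrix.transpose_apply]
        ring
    _ = ∑ j, (x j : ℝ) * tvec M y j := by
        refine Finset.sum_congr rfl fun j _ => ?_
        rw [show ((Mr Mᵀ).mulVec (tvec Mᵀ x)) j = ((x j : ℤ) : ℝ) from (congrFun hx j).symm]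

lemma chr_add_left (hdet : (Mr M).det ≠ 0) (x x' y : Fin s → ℤ) :
    chr M (x + x') y = chr M x y * chr M x' y := by
  rw [chr, chr, chr, ← Complex.exp_add, bil_add_left hdet]
  congr 1
  push_cast
  ring

lemma chr_int_vanish (n : ℤ) :
    Complex.exp (-2 * (Real.pi : ℂ) * Complex.I * ((n : ℝ) : ℂ)) = 1 := by
  have h : -2 * (Real.pi : ℂ) * Complex.I * ((n : ℝ) : ℂ)
      = ((-n : ℤ) : ℂ) * (2 * (Real.pi : ℂ) * Complex.I) := by
    push_cast
    ring
  rw [h, Complex.exp_int_mul_two_pi_mul_I]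

lemma chr_mulVec_left (hdet : (Mr M).det ≠ 0) (β y : Fin s → ℤ) :
    chr M (Mᵀ.mulVec β) y = 1 := by
  have hb : bil M (Mᵀ.mulVec β) y = ((∑ i, β i * y i : ℤ) : ℝ) := by
    rw [bil, tvec_mulVec (detT hdet)]
    push_cast
    rfl
  rw [chr, hb, chr_int_vanish]

lemma chr_rho (hdet : (Mr M).det ≠ 0) (x y : Fin s → ℤ) :
    chr M (rho Mᵀ x) y = chr M x y := by
  have h : x = rho Mᵀ x + Mᵀ.mulVec (gam Mᵀ x) := (rho_add_self x).symm
  conv_rhs => rw [h]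
  rw [chr_add_left hdet, chr_mulVec_left hdet, mul_one]

lemma chr_ne_zero (x y : Fin s → ℤ) : chr M x y ≠ 0 := Complex.exp_ne_zero _

lemma chr_zero_right (x : Fin s → ℤ) : chr M x 0 = 1 := by
  have : bil M x 0 = 0 := by simp [bil]
  rw [chr, this]
  simp

lemma chr_single_ne_one (hdet : (Mr M).det ≠ 0) {δ : Fin s → ℤ} {j₀ : Fin s}
    (hδ : ∀ n : ℤ, tvec M δ j₀ ≠ n) :
    chr M (Pi.single j₀ 1) δ ≠ 1 := by
  have hb : bil M (Pi.single j₀ 1) δ = tvec M δ j₀ := by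
    rw [bil_swap hdet]
    rw [Finset.sum_eq_single j₀]
    · simp
    · intro b _ hb
      rw [Pi.single_eq_of_ne hb]
      simp
    · intro h
      exact absurd (Finset.mem_univ j₀) h
  rw [chr, hb]
  intro hone
  rw [Complex.exp_eq_one_iff] at hone
  obtain ⟨n, hn⟩ := hone
  have hπ : (Real.pi : ℂ) ≠ 0 := by
    exact_mod_cast Real.pi_ne_zero
  have hI : Complex.I ≠ 0 := Complex.I_ne_zero
  have hmul : (2 * (Real.pi : ℂ) * Complex.I) ≠ 0 := by
    simp [hπ, hI]
  have hx : ((tvec M δ j₀ : ℝ) : ℂ) * (2 * (Real.pi : ℂ) * Complex.I)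
      = ((-n : ℤ) : ℂ) * (2 * (Real.pi : ℂ) * Complex.I) := by
    push_cast
    linear_combination -hn
  have h2 : ((tvec M δ j₀ : ℝ) : ℂ) = ((-n : ℤ) : ℂ) := mul_right_cancel₀ hmul hx
  have : tvec M δ j₀ = ((-n : ℤ) : ℝ) := by exact_mod_cast h2
  exact hδ (-n) this


lemma chr_sub_right (x y y' : Fin s → ℤ) :
    chr M x (y - y') = chr M x y * (chr M x y')⁻¹ := by
  rw [chr, chr, chr, ← Complex.exp_neg, ← Complex.exp_add, bil_sub_right]
  congr 1
  push_cast
  ring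

lemma rho_rho_add (hdet : (Mr M).det ≠ 0) (x y : Fin s → ℤ) :
    rho M (rho M x + y) = rho M (x + y) := by
  have h : rho M x + y = (x + y) + M.mulVec (-(gam M x)) := by
    rw [Matrix.mulVec_neg, rho]
    abel
  rw [h, rho_add_mulVec hdet]

lemma ortho (hdet : (Mr M).det ≠ 0) {δ : Fin s → ℤ} {j₀ : Fin s}
    (hδ : ∀ n : ℤ, tvec M δ j₀ ≠ n) :
    ∑ ξ' ∈ (EXi_finite Mᵀ).toFinset, chr M ξ' δ = 0 := by
  classical
  set η₀ : Fin s → ℤ := Pi.single j₀ 1 with hη₀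
  have hχ : chr M η₀ δ ≠ 1 := chr_single_ne_one hdet hδ
  set S := ∑ ξ' ∈ (EXi_finite Mᵀ).toFinset, chr M ξ' δ with hS
  have hdT := detT hdet
  have reindex : ∑ ξ' ∈ (EXi_finite Mᵀ).toFinset, chr M (rho Mᵀ (ξ' + η₀)) δ = S := by
    refine Finset.sum_bij' (fun a _ => rho Mᵀ (a + η₀)) (fun b _ => rho Mᵀ (b - η₀))
      (fun a _ => (Set.Finite.mem_toFinset _).2 (rho_mem hdT _))
      (fun b _ => (Set.Finite.mem_toFinset _).2 (rho_mem hdT _))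
      (fun a ha => ?_) (fun b hb => ?_) (fun a _ => rfl)
    · show rho Mᵀ (rho Mᵀ (a + η₀) - η₀) = a
      have : rho Mᵀ (a + η₀) - η₀ = rho Mᵀ (a + η₀) + (-η₀) := by abel
      rw [this, rho_rho_add hdT]
      have : a + η₀ + -η₀ = a := by abel
      rw [this]
      exact rho_eq_of_mem hdT ((Set.Finite.mem_toFinset _).1 ha)
    · show rho Mᵀ (rho Mᵀ (b - η₀) + η₀) = b
      have : rho Mᵀ (b - η₀) + η₀ = rho Mᵀ (b + (-η₀)) + η₀ := by rw [sub_eq_add_neg]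
      rw [this, rho_rho_add hdT]
      have : b + -η₀ + η₀ = b := by abel
      rw [this]
      exact rho_eq_of_mem hdT ((Set.Finite.mem_toFinset _).1 hb)
  have expand : ∑ ξ' ∈ (EXi_finite Mᵀ).toFinset, chr M (rho Mᵀ (ξ' + η₀)) δ
      = S * chr M η₀ δ := by
    rw [hS, Finset.sum_mul]
    refine Finset.sum_congr rfl fun ξ' _ => ?_
    rw [chr_rho hdet, chr_add_left hdet]
  have : S * chr M η₀ δ = S := by rw [← expand, reindex]
  by_contra hSne
  exact hχ (mul_left_cancel₀ hSne (by rw [this, mul_one]))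


/-! ### consequences of Expanding, and rootvec computations -/

lemma det_ne_zero_of_expanding {Ξ : Matrix (Fin s) (Fin s) ℤ} (hexp : Expanding Ξ) :
    (Mr Ξ).det ≠ 0 := by
  have hZ : Ξ.det ≠ 0 := by
    intro h0
    have hC : (Ξ.map (Int.cast : ℤ → ℂ)).det = 0 := by
      have hmap := (RingHom.map_det (Int.castRingHom ℂ) Ξ).symm
      rw [RingHom.mapMatrix_apply] at hmap
      rw [show (Ξ.map (Int.castRingHom ℂ : ℤ → ℂ)) = Ξ.map (Int.cast : ℤ → ℂ) from rfl] at hmap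
      rw [hmap, h0]
      simp
    have hroot : (Matrix.charpoly (Ξ.map (Int.cast : ℤ → ℂ))).IsRoot 0 := by
      have := Matrix.det_eq_sign_charpoly_coeff (Ξ.map (Int.cast : ℤ → ℂ))
      rw [hC] at this
      have hc0 : (Matrix.charpoly (Ξ.map (Int.cast : ℤ → ℂ))).coeff 0 = 0 := by
        have hne : ((-1 : ℂ)) ^ (Fintype.card (Fin s)) ≠ 0 := by
          simp
        field_simp at this
        exact (mul_eq_zero.1 this.symm).resolve_left hne
      rwa [Polynomial.IsRoot.def, ← Polynomial.coeff_zero_eq_eval_zero]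
    have := hexp 0 hroot
    simp only [norm_zero] at this
    norm_num at this
  intro h0
  apply hZ
  have : (Mr Ξ).det = ((Ξ.det : ℤ) : ℝ) := by
    have hmap := (RingHom.map_det (Int.castRingHom ℝ) Ξ).symm
    rw [RingHom.mapMatrix_apply] at hmap
    exact hmap
  rw [this] at h0
  exact_mod_cast h0

lemma rootvec_eq (Ξ : Matrix (Fin s) (Fin s) ℤ) (ξ' : Fin s → ℤ) (j : Fin s) :
    rootvec Ξ ξ' j = Complex.exp (-2 * (Real.pi : ℂ) * Complex.I
      * ((tvec Ξᵀ ξ' j : ℝ) : ℂ)) := by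
  simp only [rootvec, tvec, Mr, Matrix.transpose_map]

lemma rootvec_ne_zero (Ξ : Matrix (Fin s) (Fin s) ℤ) (ξ' : Fin s → ℤ) (j : Fin s) :
    rootvec Ξ ξ' j ≠ 0 := by
  rw [rootvec_eq]; exact Complex.exp_ne_zero _

lemma prod_rootvec_zpow (Ξ : Matrix (Fin s) (Fin s) ℤ) (ξ' v : Fin s → ℤ) :
    ∏ i, rootvec Ξ ξ' i ^ v i
      = Complex.exp (-2 * (Real.pi : ℂ) * Complex.I
          * (((∑ i, tvec Ξᵀ ξ' i * (v i : ℝ)) : ℝ) : ℂ)) := by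
  have h1 : ∀ i : Fin s, rootvec Ξ ξ' i ^ v i
      = Complex.exp ((v i : ℂ) * (-2 * (Real.pi : ℂ) * Complex.I
          * ((tvec Ξᵀ ξ' i : ℝ) : ℂ))) := by
    intro i
    rw [rootvec_eq, ← Complex.exp_int_mul]
  rw [Finset.prod_congr rfl fun i _ => h1 i, ← Complex.exp_sum]
  congr 1
  push_cast
  rw [Finset.mul_sum]
  refine Finset.sum_congr rfl fun i _ => ?_
  ring

lemma prod_rootvec_eq_chr (Ξ : Matrix (Fin s) (Fin s) ℤ) (ξ' v : Fin s → ℤ) :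
    ∏ i, rootvec Ξ ξ' i ^ v i = chr Ξ ξ' v := by
  rw [prod_rootvec_zpow, chr, bil]

lemma eSeq_mul (z w : Fin s → ℂ) (hz : ∀ j, z j ≠ 0) (hw : ∀ j, w j ≠ 0)
    (α : Fin s → ℤ) : eSeq (fun j => z j * w j) α = eSeq z α * eSeq w α := by
  rw [eSeq, eSeq, eSeq, ← Finset.prod_mul_distrib]
  refine Finset.prod_congr rfl fun j _ => ?_
  exact mul_zpow (z j) (w j) (α j)

lemma prod_rootvec_col (Ξ : Matrix (Fin s) (Fin s) ℤ) (hdet : (Mr Ξ).det ≠ 0)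
    (ξ' : Fin s → ℤ) (j : Fin s) :
    ∏ i, rootvec Ξ ξ' i ^ Ξ i j = 1 := by
  rw [prod_rootvec_zpow]
  have hsum : (∑ i, tvec Ξᵀ ξ' i * ((Ξ i j : ℤ) : ℝ)) = ((ξ' j : ℤ) : ℝ) := by
    have hspec := tvec_spec (detT hdet) ξ'
    have := congrFun hspec j
    rw [Matrix.mulVec, dotProduct] at this
    rw [← this]
    refine Finset.sum_congr rfl fun i _ => ?_
    rw [Mr_transpose, Matrix.transpose_apply]
    rw [mul_comm]
    rfl
  rw [hsum]
  exact chr_int_vanish (ξ' j)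

lemma powXi_rootvec_mul (Ξ : Matrix (Fin s) (Fin s) ℤ) (hdet : (Mr Ξ).det ≠ 0)
    (ξ' : Fin s → ℤ) (ζ : Fin s → ℂ) (hζ : ∀ j, ζ j ≠ 0) :
    powXi Ξ (fun j => rootvec Ξ ξ' j * ζ j) = powXi Ξ ζ := by
  funext j
  rw [powXi, powXi]
  calc ∏ i, (rootvec Ξ ξ' i * ζ i) ^ Ξ i j
      = ∏ i, (rootvec Ξ ξ' i ^ Ξ i j * ζ i ^ Ξ i j) :=
        Finset.prod_congr rfl fun i _ => mul_zpow _ _ _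
    _ = (∏ i, rootvec Ξ ξ' i ^ Ξ i j) * ∏ i, ζ i ^ Ξ i j := Finset.prod_mul_distrib
    _ = ∏ i, ζ i ^ Ξ i j := by rw [prod_rootvec_col Ξ hdet, one_mul]


lemma astar_eval (Ξ : Matrix (Fin s) (Fin s) ℤ) (hdet : (Mr Ξ).det ≠ 0)
    (a : (Fin s → ℤ) →₀ ℂ) (ζ : Fin s → ℂ) (hζ : ∀ j, ζ j ≠ 0) (ξ' : Fin s → ℤ) :
    astar a (fun j => rootvec Ξ ξ' j * ζ j)
      = ∑ ξ ∈ (EXi_finite Ξ).toFinset,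
          chr Ξ ξ' ξ * (eSeq ζ ξ * asubF Ξ a ξ (powXi Ξ ζ)) := by
  have hz : ∀ j, rootvec Ξ ξ' j * ζ j ≠ 0 :=
    fun j => mul_ne_zero (rootvec_ne_zero Ξ ξ' j) (hζ j)
  rw [astar_decomp hdet a _ hz]
  refine Finset.sum_congr rfl fun ξ _ => ?_
  rw [powXi_rootvec_mul Ξ hdet ξ' ζ hζ, eSeq_mul _ _ (rootvec_ne_zero Ξ ξ') hζ,
    show eSeq (rootvec Ξ ξ') ξ = chr Ξ ξ' ξ from prod_rootvec_eq_chr Ξ ξ' ξ]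
  ring

lemma exists_nonint {M : Matrix (Fin s) (Fin s) ℤ} (hdet : (Mr M).det ≠ 0)
    {ξ ξ₀ : Fin s → ℤ} (h1 : ξ ∈ EXi M) (h2 : ξ₀ ∈ EXi M) (hne : ξ ≠ ξ₀) :
    ∃ j₀, ∀ n : ℤ, tvec M (ξ - ξ₀) j₀ ≠ n := by
  by_contra hcon
  push_neg at hcon
  apply hne
  have ht : tvec M ξ = tvec M ξ₀ := by
    funext j
    obtain ⟨n, hn⟩ := hcon j
    rw [tvec_sub] at hn
    have hn' : tvec M ξ j - tvec M ξ₀ j = (n : ℝ) := hn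
    have b1 := (mem_EXi_iff hdet ξ).1 h1 j
    have b2 := (mem_EXi_iff hdet ξ₀).1 h2 j
    have hn0 : n = 0 := by
      have l1 : (n : ℝ) < 1 := by linarith [b1.2, b2.1]
      have l2 : (-1 : ℝ) < n := by linarith [b1.1, b2.2]
      have l1' : n < 1 := by exact_mod_cast l1
      have l2' : -1 < n := by exact_mod_cast l2
      omega
    rw [hn0] at hn'
    push_cast at hn'
    linarith
  have hcast := congrArg (Mr M).mulVec ht
  rw [tvec_spec hdet, tvec_spec hdet] at hcast
  funext j
  exact_mod_cast congrFun hcast j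

end Stmt15Aux


open Stmt15Aux

/-- `ζ ∈ (ℂ∖{0})^s` is a symmetric zero of `a*` if and only if `ζ^Ξ` is a
common zero of all subsymbols `a_ξ*`, `ξ ∈ E_Ξ`. -/
theorem stmt15 {s : ℕ} (Ξ : Matrix (Fin s) (Fin s) ℤ) (hexp : Expanding Ξ)
    (a : (Fin s → ℤ) →₀ ℂ) (ζ : Fin s → ℂ) (hζ : ∀ j, ζ j ≠ 0) :
    (∀ ξ' ∈ EXi Ξ.transpose, astar a (fun j => rootvec Ξ ξ' j * ζ j) = 0) ↔
      ∀ ξ ∈ EXi Ξ, asubF Ξ a ξ (powXi Ξ ζ) = 0 := by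

  classical
  have hdet : (Mr Ξ).det ≠ 0 := det_ne_zero_of_expanding hexp
  set Efin := (EXi_finite Ξ).toFinset with hEfin
  set E'fin := (EXi_finite Ξᵀ).toFinset with hE'fin
  set c : (Fin s → ℤ) → ℂ := fun ξ => eSeq ζ ξ * asubF Ξ a ξ (powXi Ξ ζ) with hc
  constructor
  · intro h ξ hξmem
    have H : ∀ ξ' ∈ E'fin, ∑ η ∈ Efin, chr Ξ ξ' η * c η = 0 := by
      intro ξ' hξ'
      rw [← astar_eval Ξ hdet a ζ hζ ξ']
      exact h ξ' ((Set.Finite.mem_toFinset _).1 hξ')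
    have hξE : ξ ∈ Efin := (Set.Finite.mem_toFinset _).2 hξmem
    have h0 : ∑ ξ' ∈ E'fin, (chr Ξ ξ' ξ)⁻¹ * (∑ η ∈ Efin, chr Ξ ξ' η * c η) = 0 :=
      Finset.sum_eq_zero fun ξ' hξ' => by rw [H ξ' hξ', mul_zero]
    have hswap : ∑ ξ' ∈ E'fin, (chr Ξ ξ' ξ)⁻¹ * (∑ η ∈ Efin, chr Ξ ξ' η * c η)
        = ∑ η ∈ Efin, (∑ ξ' ∈ E'fin, chr Ξ ξ' (η - ξ)) * c η := by
      calc ∑ ξ' ∈ E'fin, (chr Ξ ξ' ξ)⁻¹ * (∑ η ∈ Efin, chr Ξ ξ' η * c η)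
          = ∑ ξ' ∈ E'fin, ∑ η ∈ Efin, chr Ξ ξ' (η - ξ) * c η := by
            refine Finset.sum_congr rfl fun ξ' _ => ?_
            rw [Finset.mul_sum]
            refine Finset.sum_congr rfl fun η _ => ?_
            rw [chr_sub_right]
            ring
        _ = ∑ η ∈ Efin, ∑ ξ' ∈ E'fin, chr Ξ ξ' (η - ξ) * c η := Finset.sum_comm
        _ = ∑ η ∈ Efin, (∑ ξ' ∈ E'fin, chr Ξ ξ' (η - ξ)) * c η := by
            refine Finset.sum_congr rfl fun η _ => ?_
            rw [Finset.sum_mul]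
    rw [hswap] at h0
    have hoff : ∀ η ∈ Efin, η ≠ ξ → (∑ ξ' ∈ E'fin, chr Ξ ξ' (η - ξ)) * c η = 0 := by
      intro η hη hne
      obtain ⟨j₀, hj₀⟩ := exists_nonint hdet ((Set.Finite.mem_toFinset _).1 hη) hξmem hne
      rw [hE'fin, ortho hdet hj₀, zero_mul]
    rw [Finset.sum_eq_single_of_mem ξ hξE hoff] at h0
    have hdiag : ∑ ξ' ∈ E'fin, chr Ξ ξ' (ξ - ξ) = (E'fin.card : ℂ) := by
      rw [sub_self]
      rw [Finset.sum_congr rfl fun ξ' _ => chr_zero_right ξ']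
      simp
    rw [hdiag] at h0
    have hcard : (E'fin.card : ℂ) ≠ 0 := by
      have h00 : (0 : Fin s → ℤ) ∈ E'fin := (Set.Finite.mem_toFinset _).2 (zero_mem_EXi Ξᵀ)
      have hpos : 0 < E'fin.card := Finset.card_pos.2 ⟨0, h00⟩
      exact_mod_cast Nat.cast_ne_zero.2 hpos.ne'
    have hcξ : c ξ = 0 := by
      rcases mul_eq_zero.1 h0 with h' | h'
      · exact absurd h' hcard
      · exact h'
    rcases mul_eq_zero.1 hcξ with h' | h'
    · exact absurd h' (eSeq_ne_zero ζ hζ ξ)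
    · exact h'
  · intro h ξ' hξ'
    rw [astar_eval Ξ hdet a ζ hζ ξ']
    refine Finset.sum_eq_zero fun ξ hξ => ?_
    rw [h ξ ((Set.Finite.mem_toFinset _).1 hξ), mul_zero, mul_zero]
end

section
/- Let f(z) = Σ_{α∈ℤ^s} c_α z^α be a finite Laurent sum (c finitely supported), let Ξ ∈ ℤ^{s×s} be invertible, k ∈ ℕ, and z₀ ∈ (ℂ∖{0})^s. Define g(z) := f(z^Ξ) on (ℂ∖{0})^s. Then all partial derivatives of g of total order ≤ k vanish at z₀ if and only if all partial derivatives of f of total order ≤ k vanish at z₀^Ξ. -/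
open scoped Matrix

namespace St17
open MvPolynomial
variable {s : ℕ} {k : ℕ}

def Uset (s : ℕ) : Set (Fin s → ℂ) := {z | ∀ j, z j ≠ 0}
noncomputable def mzp (z : Fin s → ℂ) (α : Fin s → ℤ) : ℂ := ∏ j, z j ^ α j

noncomputable def GLS (A : Finset (Fin s → ℤ)) (d : (Fin s → ℤ) → ℂ)
    (m : (Fin s → ℤ) → (Fin s → ℤ)) (σ : Fin s → ℤ) : (Fin s → ℂ) → ℂ :=
  fun z => ∑ α ∈ A, d α * mzp z (m α - σ)

lemma zpow_mul₀ {x : ℂ} (hx : x ≠ 0) (m n : ℤ) : x ^ (m * n) = (x ^ m) ^ n := by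
  lift x to ℂˣ using isUnit_iff_ne_zero.2 hx
  rw [← Units.val_zpow_eq_zpow_val, ← Units.val_zpow_eq_zpow_val,
    ← Units.val_zpow_eq_zpow_val, zpow_mul]

lemma zpow_fsum {x : ℂ} (hx : x ≠ 0) {ι : Type*} (F : Finset ι) (n : ι → ℤ) :
    x ^ (∑ i ∈ F, n i) = ∏ i ∈ F, x ^ n i := by
  classical
  induction F using Finset.induction with
  | empty => simp
  | insert _ _ h ih => rw [Finset.sum_insert h, Finset.prod_insert h, zpow_add₀ hx, ih]

lemma mzp_ne_zero {z : Fin s → ℂ} (hz : z ∈ Uset s) (α : Fin s → ℤ) : mzp z α ≠ 0 :=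
  Finset.prod_ne_zero_iff.2 fun j _ => zpow_ne_zero _ (hz j)

lemma mzp_add {z : Fin s → ℂ} (hz : z ∈ Uset s) (α β : Fin s → ℤ) :
    mzp z (α + β) = mzp z α * mzp z β := by
  rw [mzp, mzp, mzp, ← Finset.prod_mul_distrib]
  exact Finset.prod_congr rfl fun j _ => by
    simpa using zpow_add₀ (hz j) (α j) (β j)

lemma hasFDerivAt_mzp {z : Fin s → ℂ} (hz : z ∈ Uset s) (γ : Fin s → ℤ) :
    HasFDerivAt (fun z => mzp z γ)
      (∑ i, (∏ i' ∈ Finset.univ.erase i, z i' ^ γ i') •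
        (((γ i : ℂ) * z i ^ (γ i - 1)) • (ContinuousLinearMap.proj i : (Fin s → ℂ) →L[ℂ] ℂ))) z := by
  apply HasFDerivAt.finset_prod
  intro i _
  exact (hasDerivAt_zpow (γ i) (z i) (Or.inl (hz i))).comp_hasFDerivAt z
    (hasFDerivAt_apply i z :
      HasFDerivAt (fun f : Fin s → ℂ => f i) (ContinuousLinearMap.proj i : (Fin s → ℂ) →L[ℂ] ℂ) z)

lemma pd_apply_hasFDerivAt {F : (Fin s → ℂ) → ℂ} {L : (Fin s → ℂ) →L[ℂ] ℂ} {z : Fin s → ℂ} (j : Fin s)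
    (h : HasFDerivAt F L z) : pd j F z = L (Pi.single j 1) := by
  rw [pd, h.fderiv]

lemma pd_mzp {z : Fin s → ℂ} (hz : z ∈ Uset s) (γ : Fin s → ℤ) (j : Fin s) :
    pd j (fun z => mzp z γ) z = (γ j : ℂ) * mzp z (γ - Pi.single j 1) := by
  rw [pd_apply_hasFDerivAt j (hasFDerivAt_mzp hz γ)]
  rw [ContinuousLinearMap.sum_apply]
  rw [Finset.sum_eq_single j]
  · simp only [ContinuousLinearMap.smul_apply, ContinuousLinearMap.proj_apply,
      Pi.single_eq_same, smul_eq_mul, mul_one]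
    have : mzp z (γ - Pi.single j 1) = z j ^ (γ j - 1) * ∏ i' ∈ Finset.univ.erase j, z i' ^ γ i' := by
      rw [mzp, ← Finset.mul_prod_erase Finset.univ _ (Finset.mem_univ j)]
      congr 1
      · simp
      · exact Finset.prod_congr rfl fun i hi => by
          rw [Pi.sub_apply, Pi.single_apply, if_neg (Finset.mem_erase.1 hi).1, sub_zero]
    rw [this]; ring
  · intro i _ hij
    simp [Pi.single_apply, (Ne.symm hij)]
  · simp

lemma pd_GLS {A : Finset (Fin s → ℤ)} {d : (Fin s → ℤ) → ℂ}
    {m : (Fin s → ℤ) → (Fin s → ℤ)} {σ : Fin s → ℤ} {z : Fin s → ℂ}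
    (hz : z ∈ Uset s) (j : Fin s) :
    pd j (GLS A d m σ) z
      = GLS A (fun α => d α * ((m α j - σ j : ℤ) : ℂ)) m (σ + Pi.single j 1) z := by
  have h : HasFDerivAt (GLS A d m σ)
      (∑ α ∈ A, d α • (∑ i, (∏ i' ∈ Finset.univ.erase i, z i' ^ (m α - σ) i') •
        ((((m α - σ) i : ℂ) * z i ^ ((m α - σ) i - 1)) • (ContinuousLinearMap.proj i : (Fin s → ℂ) →L[ℂ] ℂ)))) z := by
    apply HasFDerivAt.fun_sum
    intro α _
    exact (hasFDerivAt_mzp hz (m α - σ)).const_mul (d α)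
  rw [pd_apply_hasFDerivAt j h, ContinuousLinearMap.sum_apply, GLS]
  apply Finset.sum_congr rfl
  intro α _
  rw [ContinuousLinearMap.smul_apply]
  have := pd_mzp hz (m α - σ) j
  rw [pd_apply_hasFDerivAt j (hasFDerivAt_mzp hz (m α - σ))] at this
  rw [this]
  have : m α - (σ + Pi.single j 1) = (m α - σ) - Pi.single j 1 := by ring
  rw [this]
  simp only [Pi.sub_apply, smul_eq_mul]
  push_cast
  ring

lemma isOpen_Uset : IsOpen (Uset s) := by
  have : Uset s = ⋂ j, (fun z : Fin s → ℂ => z j) ⁻¹' {(0 : ℂ)}ᶜ := by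
    ext z; simp [Uset]
  rw [this]
  exact isOpen_iInter_of_finite fun j =>
    (isOpen_compl_singleton).preimage (continuous_apply j)

lemma pd_congr {F G : (Fin s → ℂ) → ℂ} (h : Set.EqOn F G (Uset s)) (j : Fin s) :
    Set.EqOn (pd j F) (pd j G) (Uset s) := by
  intro z hz
  have : F =ᶠ[nhds z] G :=
    Filter.eventuallyEq_of_mem (isOpen_Uset.mem_nhds hz) h
  rw [pd, pd, this.fderiv_eq]

lemma pd_iter_congr {F G : (Fin s → ℂ) → ℂ} (h : Set.EqOn F G (Uset s)) (j : Fin s)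
    (n : ℕ) : Set.EqOn ((pd j)^[n] F) ((pd j)^[n] G) (Uset s) := by
  induction n with
  | zero => exact h
  | succ n ih =>
    rw [Function.iterate_succ_apply', Function.iterate_succ_apply']
    exact pd_congr ih j

lemma GLS_congr {A : Finset (Fin s → ℤ)} {d d' : (Fin s → ℤ) → ℂ}
    {m : (Fin s → ℤ) → (Fin s → ℤ)} {σ σ' : Fin s → ℤ}
    (hd : ∀ α ∈ A, d α = d' α) (hσ : σ = σ') :
    GLS A d m σ = GLS A d' m σ' := by
  subst hσ; funext z; exact Finset.sum_congr rfl fun α hα => by rw [hd α hα]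

lemma iter_pd_GLS {A : Finset (Fin s → ℤ)} {d : (Fin s → ℤ) → ℂ}
    {m : (Fin s → ℤ) → (Fin s → ℤ)} {σ : Fin s → ℤ} (j : Fin s) (n : ℕ) :
    Set.EqOn ((pd j)^[n] (GLS A d m σ))
      (GLS A (fun α => d α * ∏ t ∈ Finset.range n, ((m α j : ℂ) - σ j - t))
        m (σ + n • Pi.single j 1)) (Uset s) := by
  induction n with
  | zero =>
    intro z hz
    simp only [Function.iterate_zero_apply]
    rw [show (GLS A (fun α => d α * ∏ t ∈ Finset.range 0, ((m α j : ℂ) - σ j - t))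
        m (σ + 0 • Pi.single j 1)) = GLS A d m σ from
      (GLS_congr (fun α _ => by simp) (by simp)).symm]
  | succ n ih =>
    intro z hz
    rw [Function.iterate_succ_apply', pd_congr ih j hz, pd_GLS hz j]
    have hσj : ((σ + n • Pi.single j 1 : Fin s → ℤ)) j = σ j + n := by simp
    have harg : ((σ + n • Pi.single j 1 : Fin s → ℤ)) + Pi.single j 1 = σ + (n + 1) • Pi.single j 1 := by
      ext i
      by_cases hij : i = j
      · subst hij; simp [Pi.single_apply]; ring
      · simp [Pi.single_apply, hij]
    exact congrFun (GLS_congr (fun α _ => by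
      rw [hσj, Finset.prod_range_succ]; push_cast; ring) harg) z

noncomputable def Olist (β : Fin s → ℕ) (l : List (Fin s)) (f : (Fin s → ℂ) → ℂ) :
    (Fin s → ℂ) → ℂ :=
  (l.map fun j => (pd j)^[β j]).foldr (· ∘ ·) id f

noncomputable def βδ (β : Fin s → ℕ) (l : List (Fin s)) : Fin s → ℤ :=
  (l.map fun j => (β j : ℤ) • Pi.single j (1:ℤ)).sum

lemma βδ_apply (β : Fin s → ℕ) (l : List (Fin s)) (i : Fin s) :
    βδ β l i = ((l.map fun j => if j = i then (β j : ℤ) else 0)).sum := by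
  rw [βδ]
  induction l with
  | nil => simp
  | cons j l ih =>
    simp only [List.map_cons, List.sum_cons, Pi.add_apply, ih]
    congr 1
    by_cases hij : j = i <;> simp [hij, Pi.single_apply]

lemma βδ_apply_not_mem (β : Fin s → ℕ) {l : List (Fin s)} {i : Fin s} (h : i ∉ l) :
    βδ β l i = 0 := by
  rw [βδ_apply]
  have : ∀ x ∈ l.map fun j => if j = i then (β j : ℤ) else 0, x = 0 := by
    intro x hx
    rcases List.mem_map.1 hx with ⟨j, hj, rfl⟩
    rw [if_neg]; rintro rfl; exact h hj
  exact List.sum_eq_zero this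

lemma Olist_cons (β : Fin s → ℕ) (j : Fin s) (l : List (Fin s)) (f : (Fin s → ℂ) → ℂ) :
    Olist β (j :: l) f = (pd j)^[β j] (Olist β l f) := rfl

lemma fold_pd_GLS {A : Finset (Fin s → ℤ)} {d : (Fin s → ℤ) → ℂ}
    {m : (Fin s → ℤ) → (Fin s → ℤ)} {σ : Fin s → ℤ} (β : Fin s → ℕ)
    (l : List (Fin s)) (hl : l.Nodup) :
    Set.EqOn (Olist β l (GLS A d m σ))
      (GLS A (fun α =>
          d α * (l.map fun j => ∏ t ∈ Finset.range (β j), ((m α j : ℂ) - σ j - t)).prod)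
        m (σ + βδ β l)) (Uset s) := by
  induction l with
  | nil =>
    intro z hz
    exact congrFun (GLS_congr (fun α _ => by simp) (by simp [βδ])) z
  | cons j l ih =>
    intro z hz
    rw [Olist_cons]
    have hjl : j ∉ l := (List.nodup_cons.1 hl).1
    have ih' := ih (List.nodup_cons.1 hl).2
    rw [pd_iter_congr ih' j (β j) hz]
    rw [iter_pd_GLS j (β j) hz]
    have hσj : ((σ + βδ β l : Fin s → ℤ)) j = σ j := by
      rw [Pi.add_apply, βδ_apply_not_mem β hjl, add_zero]
    have harg : (σ + βδ β l) + (β j) • Pi.single j (1:ℤ) = σ + βδ β (j :: l) := by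
      simp only [βδ, List.map_cons, List.sum_cons]
      ext i
      simp only [Pi.add_apply, Pi.smul_apply, smul_eq_mul, nsmul_eq_mul, Pi.mul_apply,
        Pi.natCast_apply]
      push_cast
      ring
    exact congrFun (GLS_congr (fun α _ => by
      rw [hσj, List.map_cons, List.prod_cons]
      push_cast
      ring) harg) z


/-- all monomials of `P` have degree `< n` -/
def Dlt (n : ℕ) (P : MvPolynomial (Fin s) ℂ) : Prop :=
  ∀ mo ∈ P.support, (mo.sum fun _ e => e) < n

lemma Dlt_zero (n : ℕ) : Dlt n (0 : MvPolynomial (Fin s) ℂ) := by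
  intro mo h; simp at h

lemma Dlt_add {n : ℕ} {P Q : MvPolynomial (Fin s) ℂ} (hP : Dlt n P) (hQ : Dlt n Q) :
    Dlt n (P + Q) := by
  intro mo h
  rcases Finset.mem_union.1 (MvPolynomial.support_add h) with h' | h'
  · exact hP mo h'
  · exact hQ mo h'

lemma Dlt_of_totalDegree_lt {n : ℕ} {P : MvPolynomial (Fin s) ℂ}
    (h : P.totalDegree < n) : Dlt n P :=
  fun mo hmo => lt_of_le_of_lt (le_totalDegree hmo) h

lemma Dlt_mul {n q : ℕ} {P Q : MvPolynomial (Fin s) ℂ} (hP : Dlt n P)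
    (hQ : Q.totalDegree ≤ q) : Dlt (n + q) (P * Q) := by
  intro mo hmo
  rcases Finset.mem_add.1 (MvPolynomial.support_mul P Q hmo) with ⟨a, ha, b, hb, rfl⟩
  have h1 : (a.sum fun _ e => e) < n := hP a ha
  have h2 : (b.sum fun _ e => e) ≤ q := le_trans (le_totalDegree hb) hQ
  have : ((a + b).sum fun _ e => e) = (a.sum fun _ e => e) + (b.sum fun _ e => e) :=
    Finsupp.sum_add_index' (fun _ => rfl) (fun _ _ _ => rfl)
  omega

lemma Dlt_mono {n m : ℕ} {P : MvPolynomial (Fin s) ℂ} (h : Dlt n P) (hnm : n ≤ m) :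
    Dlt m P := fun mo hmo => lt_of_lt_of_le (h mo hmo) hnm

lemma Dlt_neg {n : ℕ} {P : MvPolynomial (Fin s) ℂ} (h : Dlt n P) : Dlt n (-P) := by
  intro mo hmo
  exact h mo (by simpa [MvPolynomial.support_neg] using hmo)

lemma Dlt_sub {n : ℕ} {P Q : MvPolynomial (Fin s) ℂ} (hP : Dlt n P) (hQ : Dlt n Q) :
    Dlt n (P - Q) := by
  rw [sub_eq_add_neg]; exact Dlt_add hP (Dlt_neg hQ)

lemma Dlt_mul_Dlt {n q : ℕ} {P Q : MvPolynomial (Fin s) ℂ} (hP : Dlt n P)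
    (hQ : Dlt q Q) : Dlt (n + q) (P * Q) := by
  intro mo hmo
  rcases Finset.mem_add.1 (MvPolynomial.support_mul P Q hmo) with ⟨a, ha, b, hb, rfl⟩
  have h1 : (a.sum fun _ e => e) < n := hP a ha
  have h2 : (b.sum fun _ e => e) < q := hQ b hb
  have : ((a + b).sum fun _ e => e) = (a.sum fun _ e => e) + (b.sum fun _ e => e) :=
    Finsupp.sum_add_index' (fun _ => rfl) (fun _ _ _ => rfl)
  omega

lemma Dlt_mul' {n q : ℕ} {P Q : MvPolynomial (Fin s) ℂ} (hP : Dlt n P)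
    (hQ : Q.totalDegree ≤ q) : Dlt (q + n) (Q * P) := by
  rw [mul_comm Q P, add_comm q n]; exact Dlt_mul hP hQ

/-- falling-factorial polynomial built from linear forms -/
noncomputable def PffL (L : Fin s → MvPolynomial (Fin s) ℂ) (β : Fin s → ℕ) :
    MvPolynomial (Fin s) ℂ :=
  ∏ j, ∏ t ∈ Finset.range (β j), (L j - C (t : ℂ))

lemma totalDegree_linfac {L : MvPolynomial (Fin s) ℂ} (hL : L.totalDegree ≤ 1) (t : ℂ) :
    (L - C t).totalDegree ≤ 1 := by
  have : L - C t = L + C (-t) := by rw [map_neg, sub_eq_add_neg]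
  rw [this]
  refine le_trans (totalDegree_add _ _) (max_le hL ?_)
  simp [totalDegree_C]

lemma totalDegree_PffL {L : Fin s → MvPolynomial (Fin s) ℂ}
    (hL : ∀ j, (L j).totalDegree ≤ 1) (β : Fin s → ℕ) :
    (PffL L β).totalDegree ≤ ∑ j, β j := by
  refine le_trans (totalDegree_finset_prod _ _) (Finset.sum_le_sum fun j _ => ?_)
  refine le_trans (totalDegree_finset_prod _ _) ?_
  have h1 : ∑ t ∈ Finset.range (β j), (L j - C (t:ℂ)).totalDegree
      ≤ ∑ _t ∈ Finset.range (β j), 1 :=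
    Finset.sum_le_sum fun t _ => totalDegree_linfac (hL j) _
  simpa using h1

/-- one-variable leading term decomposition -/
lemma linfac_prod_lead {L : MvPolynomial (Fin s) ℂ} (hL : L.totalDegree ≤ 1) (n : ℕ) :
    ∃ r, (∏ t ∈ Finset.range n, (L - C (t : ℂ))) = L ^ n + r ∧ Dlt n r := by
  induction n with
  | zero => exact ⟨0, by simp, Dlt_zero 0⟩
  | succ n ih =>
    obtain ⟨r, hr, hDr⟩ := ih
    refine ⟨r * L - C (n:ℂ) * L ^ n - C (n:ℂ) * r, ?_, ?_⟩
    · rw [Finset.prod_range_succ, hr]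
      ring
    · have h1 : Dlt (n+1) (r * L) := Dlt_mul hDr hL
      have h2 : Dlt (n+1) (C (n:ℂ) * L ^ n) := by
        apply Dlt_of_totalDegree_lt
        refine lt_of_le_of_lt (totalDegree_mul _ _) ?_
        have hp : (L ^ n).totalDegree ≤ n := by
          refine le_trans (totalDegree_pow _ _) ?_
          calc n * L.totalDegree ≤ n * 1 := Nat.mul_le_mul_left n hL
            _ = n := mul_one n
        have hc : (C (n:ℂ) : MvPolynomial (Fin s) ℂ).totalDegree = 0 := totalDegree_C _
        omega
      have h3 : Dlt (n+1) (C (n:ℂ) * r) := by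
        have hq : ((C (n:ℂ) : MvPolynomial (Fin s) ℂ)).totalDegree ≤ 0 :=
          le_of_eq (totalDegree_C _)
        have := Dlt_mul' (q := 0) hDr hq
        exact Dlt_mono (by simpa using this) (by omega)
      exact Dlt_sub (Dlt_sub h1 h2) h3

/-- product leading term decomposition -/
lemma prod_lead {M r : Fin s → MvPolynomial (Fin s) ℂ} {β : Fin s → ℕ}
    (hM : ∀ j, (M j).totalDegree ≤ β j) (hr : ∀ j, Dlt (β j) (r j)) :
    ∀ F : Finset (Fin s), ∃ R, (∏ j ∈ F, (M j + r j)) = (∏ j ∈ F, M j) + R ∧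
      Dlt (∑ j ∈ F, β j) R := by
  classical
  intro F
  induction F using Finset.induction with
  | empty => exact ⟨0, by simp, Dlt_zero 0⟩
  | @insert j F hj ih =>
    obtain ⟨R, hR, hDR⟩ := ih
    rw [Finset.prod_insert hj, Finset.prod_insert hj, Finset.sum_insert hj, hR]
    refine ⟨M j * R + r j * (∏ i ∈ F, M i) + r j * R, by ring, ?_⟩
    have hdF : (∏ i ∈ F, M i).totalDegree ≤ ∑ i ∈ F, β i :=
      le_trans (totalDegree_finset_prod _ _) (Finset.sum_le_sum fun i _ => hM i)
    have h1 : Dlt (β j + ∑ i ∈ F, β i) (M j * R) := Dlt_mul' hDR (hM j)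
    have h2 : Dlt (β j + ∑ i ∈ F, β i) (r j * (∏ i ∈ F, M i)) := Dlt_mul (hr j) hdF
    have h3 : Dlt (β j + ∑ i ∈ F, β i) (r j * R) := Dlt_mul_Dlt (hr j) hDR
    exact Dlt_add (Dlt_add h1 h2) h3

lemma PffL_lead {L : Fin s → MvPolynomial (Fin s) ℂ} (hL : ∀ j, (L j).totalDegree ≤ 1)
    (β : Fin s → ℕ) :
    ∃ R, PffL L β = (∏ j, (L j) ^ (β j)) + R ∧ Dlt (∑ j, β j) R := by
  choose r hr hDr using fun j => linfac_prod_lead (hL j) (β j)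
  have hM : ∀ j, ((L j) ^ (β j)).totalDegree ≤ β j := by
    intro j
    refine le_trans (totalDegree_pow _ _) ?_
    calc β j * (L j).totalDegree ≤ β j * 1 := Nat.mul_le_mul_left _ (hL j)
      _ = β j := mul_one _
  obtain ⟨R, hR, hDR⟩ := prod_lead hM hDr Finset.univ
  refine ⟨R, ?_, hDR⟩
  rw [PffL, Finset.prod_congr rfl fun j _ => hr j, hR]

/-- span of the generators `G β`, `∑ β ≤ k` -/
noncomputable def Vspan (G : (Fin s → ℕ) → MvPolynomial (Fin s) ℂ) (k : ℕ) :
    Submodule ℂ (MvPolynomial (Fin s) ℂ) :=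
  Submodule.span ℂ {Q | ∃ β : Fin s → ℕ, (∑ j, β j) ≤ k ∧ Q = G β}

noncomputable def PffX (β : Fin s → ℕ) : MvPolynomial (Fin s) ℂ :=
  PffL (fun j => X j) β

lemma finsupp_deg_eq (mo : Fin s →₀ ℕ) : (mo.sum fun _ e => e) = ∑ j, mo j :=
  Finsupp.sum_fintype _ _ fun _ => rfl

lemma monomial_eq_smul_prod (mo : Fin s →₀ ℕ) (a : ℂ) :
    (monomial mo a : MvPolynomial (Fin s) ℂ) = a • ∏ j, (X j : MvPolynomial (Fin s) ℂ) ^ mo j := by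
  rw [monomial_eq, smul_eq_C_mul]
  congr 1
  rw [Finsupp.prod_fintype]
  intro j; rfl

lemma Xprod_mem (k : ℕ) : ∀ n : ℕ, ∀ β : Fin s → ℕ, (∑ j, β j) = n → n ≤ k →
    (∏ j, (X j : MvPolynomial (Fin s) ℂ) ^ β j) ∈ Vspan PffX k := by
  intro n
  induction n using Nat.strong_induction_on with
  | _ n ih =>
    intro β hβ hk
    have hgen : PffX β ∈ Vspan PffX k :=
      Submodule.subset_span ⟨β, by omega, rfl⟩
    obtain ⟨R, hR, hDR⟩ := PffL_lead (L := fun j => X j)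
      (fun j => le_of_eq (totalDegree_X j)) β
    rw [← PffX] at hR
    have hRmem : R ∈ Vspan PffX k := by
      rw [as_sum R]
      refine Submodule.sum_mem _ fun mo hmo => ?_
      rw [monomial_eq_smul_prod]
      refine Submodule.smul_mem _ _ ?_
      have hlt : (∑ j, mo j) < n := by
        have h := hDR mo hmo
        rw [finsupp_deg_eq] at h
        omega
      exact ih _ hlt (fun j => mo j) rfl (by omega)
    have : (∏ j, (X j : MvPolynomial (Fin s) ℂ) ^ β j) = PffX β - R := by
      rw [hR]; ring
    rw [this]
    exact Submodule.sub_mem _ hgen hRmem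

lemma mem_VspanX {P : MvPolynomial (Fin s) ℂ} (hP : P.totalDegree ≤ k) :
    P ∈ Vspan PffX k := by
  rw [as_sum P]
  refine Submodule.sum_mem _ fun mo hmo => ?_
  rw [monomial_eq_smul_prod]
  refine Submodule.smul_mem _ _ (Xprod_mem k (∑ j, mo j) _ rfl ?_)
  rw [← finsupp_deg_eq]
  exact le_trans (le_totalDegree hmo) hP

/-- linear form from a matrix row -/
noncomputable def lineP (N : Matrix (Fin s) (Fin s) ℂ) (j : Fin s) :
    MvPolynomial (Fin s) ℂ :=
  ∑ i, C (N j i) * X i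

lemma totalDegree_lineP (N : Matrix (Fin s) (Fin s) ℂ) (j : Fin s) :
    (lineP N j).totalDegree ≤ 1 := by
  refine le_trans (totalDegree_finset_sum _ _) (Finset.sup_le fun i _ => ?_)
  refine le_trans (totalDegree_mul _ _) ?_
  simp [totalDegree_C, totalDegree_X]

lemma bind₁_lineP_lineP (M N : Matrix (Fin s) (Fin s) ℂ) (j : Fin s) :
    bind₁ (lineP M) (lineP N j) = lineP (N * M) j := by
  rw [lineP, map_sum]
  have step : ∀ i, bind₁ (lineP M) (C (N j i) * X i) = C (N j i) * lineP M i := by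
    intro i; rw [map_mul, bind₁_C_right, bind₁_X_right]
  rw [Finset.sum_congr rfl fun i _ => step i]
  have : ∀ i, C (N j i) * lineP M i = ∑ l, C (N j i * M i l) * X l := by
    intro i
    rw [lineP, Finset.mul_sum]
    exact Finset.sum_congr rfl fun l _ => by rw [← mul_assoc, ← C_mul]
  rw [Finset.sum_congr rfl fun i _ => this i, Finset.sum_comm, lineP]
  refine Finset.sum_congr rfl fun l _ => ?_
  rw [← Finset.sum_mul, ← map_sum, Matrix.mul_apply]

lemma lineP_one (j : Fin s) : lineP (1 : Matrix (Fin s) (Fin s) ℂ) j = X j := by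
  rw [lineP]
  rw [Finset.sum_eq_single j]
  · simp [Matrix.one_apply]
  · intro i _ hij
    simp [Matrix.one_apply, Ne.symm hij]
  · simp

lemma bind₁_lineP_inv {M N : Matrix (Fin s) (Fin s) ℂ} (h : N * M = 1)
    (P : MvPolynomial (Fin s) ℂ) : bind₁ (lineP M) (bind₁ (lineP N) P) = P := by
  rw [bind₁_bind₁]
  have : (fun i => bind₁ (lineP M) (lineP N i)) = fun i => X i := by
    funext i
    rw [bind₁_lineP_lineP, h, lineP_one]
  rw [this]
  have := bind₁_X_left (σ := Fin s) (R := ℂ)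
  calc (bind₁ fun i => X i) P = bind₁ X P := rfl
    _ = P := by rw [this]; rfl

lemma totalDegree_bind₁_lineP (N : Matrix (Fin s) (Fin s) ℂ)
    (P : MvPolynomial (Fin s) ℂ) :
    (bind₁ (lineP N) P).totalDegree ≤ P.totalDegree := by
  conv_lhs => rw [as_sum P]
  rw [map_sum]
  refine le_trans (totalDegree_finset_sum _ _) (Finset.sup_le fun mo hmo => ?_)
  rw [bind₁_monomial]
  refine le_trans (totalDegree_mul _ _) ?_
  have h2 : (∏ i ∈ mo.support, lineP N i ^ mo i).totalDegree ≤ mo.sum fun _ e => e := by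
    refine le_trans (totalDegree_finset_prod _ _) ?_
    rw [Finsupp.sum]
    refine Finset.sum_le_sum fun i _ => ?_
    refine le_trans (totalDegree_pow _ _) ?_
    calc mo i * (lineP N i).totalDegree ≤ mo i * 1 :=
        Nat.mul_le_mul_left _ (totalDegree_lineP N i)
      _ = mo i := mul_one _
  have h3 : (mo.sum fun _ e => e) ≤ P.totalDegree := le_totalDegree hmo
  simp only [totalDegree_C, zero_add]
  omega

lemma mem_Vspan_bind {N M : Matrix (Fin s) (Fin s) ℂ} (hNM : N * M = 1) (hMN : M * N = 1)
    {P : MvPolynomial (Fin s) ℂ} (hP : P.totalDegree ≤ k) :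
    P ∈ Vspan (fun β => bind₁ (lineP N) (PffX β)) k := by
  set φ := (bind₁ (lineP N) : MvPolynomial (Fin s) ℂ →ₐ[ℂ] MvPolynomial (Fin s) ℂ)
  have hQ : bind₁ (lineP M) P ∈ Vspan PffX k :=
    mem_VspanX (le_trans (totalDegree_bind₁_lineP M P) hP)
  have hPQ : P = φ (bind₁ (lineP M) P) := (bind₁_lineP_inv hMN P).symm
  rw [hPQ]
  have himg : φ (bind₁ (lineP M) P) ∈ Submodule.map φ.toLinearMap (Vspan PffX k) :=
    Submodule.mem_map_of_mem hQ
  refine Submodule.span_le.2 ?_ <| by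
    rw [Vspan, Submodule.map_span] at himg
    exact himg
  rintro Q ⟨Q', ⟨β, hβ, rfl⟩, rfl⟩
  exact Submodule.subset_span ⟨β, hβ, rfl⟩

lemma key_iff (T : MvPolynomial (Fin s) ℂ →ₗ[ℂ] ℂ)
    (G : (Fin s → ℕ) → MvPolynomial (Fin s) ℂ)
    (hdeg : ∀ β : Fin s → ℕ, (∑ j, β j) ≤ k → (G β).totalDegree ≤ k)
    (hspan : ∀ P : MvPolynomial (Fin s) ℂ, P.totalDegree ≤ k → P ∈ Vspan G k) :
    (∀ β : Fin s → ℕ, (∑ j, β j) ≤ k → T (G β) = 0) ↔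
      (∀ P : MvPolynomial (Fin s) ℂ, P.totalDegree ≤ k → T P = 0) := by
  constructor
  · intro h P hP
    have : Vspan G k ≤ LinearMap.ker T := by
      rw [Vspan, Submodule.span_le]
      rintro Q ⟨β, hβ, rfl⟩
      exact h β hβ
    exact this (hspan P hP)
  · intro h β hβ
    exact h _ (hdeg β hβ)


open MvPolynomial

noncomputable def czv (α : Fin s → ℤ) : Fin s → ℂ := fun j => (α j : ℂ)

noncomputable def Tfun (A : Finset (Fin s → ℤ)) (d : (Fin s → ℤ) → ℂ) (w : Fin s → ℂ) :
    MvPolynomial (Fin s) ℂ →ₗ[ℂ] ℂ :=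
  ∑ α ∈ A, (d α * mzp w α) • ((MvPolynomial.aeval (czv α)).toLinearMap)

lemma Tfun_apply (A : Finset (Fin s → ℤ)) (d : (Fin s → ℤ) → ℂ) (w : Fin s → ℂ)
    (P : MvPolynomial (Fin s) ℂ) :
    Tfun A d w P = ∑ α ∈ A, d α * mzp w α * MvPolynomial.aeval (czv α) P := by
  rw [Tfun, LinearMap.sum_apply]
  exact Finset.sum_congr rfl fun α _ => by simp

lemma aeval_PffX (α : Fin s → ℤ) (β : Fin s → ℕ) :
    MvPolynomial.aeval (czv α) (PffX β)
      = ∏ j, ∏ t ∈ Finset.range (β j), ((α j : ℂ) - t) := by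
  rw [PffX, PffL, map_prod]
  refine Finset.prod_congr rfl fun j _ => ?_
  rw [map_prod]
  refine Finset.prod_congr rfl fun t _ => ?_
  rw [map_sub, aeval_X, aeval_C]
  rfl

lemma aeval_lineP (N : Matrix (Fin s) (Fin s) ℂ) (x : Fin s → ℂ) (j : Fin s) :
    MvPolynomial.aeval x (lineP N j) = ∑ i, N j i * x i := by
  rw [lineP, map_sum]
  exact Finset.sum_congr rfl fun i _ => by rw [map_mul, aeval_X, aeval_C]; rfl

lemma aeval_bind_lineP (N : Matrix (Fin s) (Fin s) ℂ) (x : Fin s → ℂ)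
    (P : MvPolynomial (Fin s) ℂ) :
    MvPolynomial.aeval x (bind₁ (lineP N) P) = MvPolynomial.aeval (N.mulVec x) P := by
  rw [aeval_bind₁]
  have hfun : (fun i => MvPolynomial.aeval x (lineP N i)) = N.mulVec x := by
    funext i
    rw [aeval_lineP]
    simp [Matrix.mulVec, dotProduct]
  rw [hfun]

lemma czv_mulVec (Ξ : Matrix (Fin s) (Fin s) ℤ) (α : Fin s → ℤ) :
    (Ξ.map (Int.cast : ℤ → ℂ)).mulVec (czv α) = czv (Ξ.mulVec α) := by
  funext i
  simp only [Matrix.mulVec, dotProduct, Matrix.map_apply, czv]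
  push_cast
  rfl

lemma powXi_mem {Ξ : Matrix (Fin s) (Fin s) ℤ} {z : Fin s → ℂ} (hz : z ∈ Uset s) :
    powXi Ξ z ∈ Uset s := by
  intro j
  exact Finset.prod_ne_zero_iff.2 fun i _ => zpow_ne_zero _ (hz i)

lemma mzp_powXi {Ξ : Matrix (Fin s) (Fin s) ℤ} {z : Fin s → ℂ} (hz : z ∈ Uset s)
    (α : Fin s → ℤ) : mzp (powXi Ξ z) α = mzp z (Ξ.mulVec α) := by
  rw [mzp]
  unfold powXi
  have h1 : ∀ j, (∏ i, z i ^ Ξ i j) ^ α j = ∏ i, z i ^ (Ξ i j * α j) := by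
    intro j
    rw [← Finset.prod_zpow]
    exact Finset.prod_congr rfl fun i _ => (zpow_mul₀ (hz i) _ _).symm
  rw [Finset.prod_congr rfl fun j _ => h1 j, Finset.prod_comm, mzp]
  refine Finset.prod_congr rfl fun i _ => ?_
  rw [← zpow_fsum (hz i)]
  congr 1

lemma pdMulti_eq_Olist (β : Fin s → ℕ) (f : (Fin s → ℂ) → ℂ) :
    pdMulti β f = Olist β (List.finRange s) f := by
  rw [pdMulti, Olist, List.ofFn_eq_map]

lemma Olist_congr {F G : (Fin s → ℂ) → ℂ} (h : Set.EqOn F G (Uset s)) (β : Fin s → ℕ) :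
    ∀ l : List (Fin s), Set.EqOn (Olist β l F) (Olist β l G) (Uset s) := by
  intro l
  induction l with
  | nil => exact h
  | cons j l ih => exact pd_iter_congr ih j (β j)

lemma pdMulti_congrU {F G : (Fin s → ℂ) → ℂ} (h : Set.EqOn F G (Uset s)) (β : Fin s → ℕ) :
    Set.EqOn (pdMulti β F) (pdMulti β G) (Uset s) := by
  rw [pdMulti_eq_Olist, pdMulti_eq_Olist]
  exact Olist_congr h β (List.finRange s)

lemma βδ_finRange (β : Fin s → ℕ) : βδ β (List.finRange s) = fun j => (β j : ℤ) := by
  funext i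
  rw [βδ_apply, ← Fin.sum_univ_def]
  rw [Finset.sum_ite_eq' Finset.univ i (fun j => (β j : ℤ))]
  simp

lemma pdMulti_GLS {A : Finset (Fin s → ℤ)} {d : (Fin s → ℤ) → ℂ}
    {m : (Fin s → ℤ) → (Fin s → ℤ)} (β : Fin s → ℕ) {z : Fin s → ℂ} (hz : z ∈ Uset s) :
    pdMulti β (GLS A d m 0) z =
      ∑ α ∈ A, d α * (∏ j, ∏ t ∈ Finset.range (β j), ((m α j : ℂ) - t)) *
        mzp z (m α - fun j => (β j : ℤ)) := by
  rw [pdMulti_eq_Olist]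
  rw [fold_pd_GLS β (List.finRange s) (List.nodup_finRange s) hz]
  rw [GLS]
  refine Finset.sum_congr rfl fun α _ => ?_
  have h1 : ((List.finRange s).map fun j =>
      ∏ t ∈ Finset.range (β j), ((m α j : ℂ) - ((0 : Fin s → ℤ) j : ℤ) - t)).prod
      = ∏ j, ∏ t ∈ Finset.range (β j), ((m α j : ℂ) - t) := by
    rw [← Fin.prod_univ_def]
    refine Finset.prod_congr rfl fun j _ => Finset.prod_congr rfl fun t _ => by
      simp
  have h2 : (0 : Fin s → ℤ) + βδ β (List.finRange s) = fun j => (β j : ℤ) := by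
    rw [βδ_finRange, zero_add]
  rw [h2]
  rw [mul_assoc, ← h1]
  rw [mul_assoc]

lemma side_iff {A : Finset (Fin s → ℤ)} {d : (Fin s → ℤ) → ℂ}
    {m : (Fin s → ℤ) → (Fin s → ℤ)} (β : Fin s → ℕ) {z : Fin s → ℂ} (hz : z ∈ Uset s) :
    pdMulti β (GLS A d m 0) z = 0 ↔
      ∑ α ∈ A, d α * (∏ j, ∏ t ∈ Finset.range (β j), ((m α j : ℂ) - t)) *
        mzp z (m α) = 0 := by
  rw [pdMulti_GLS β hz]
  set q := mzp z (fun j => (β j : ℤ)) with hqdef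
  have hq : q ≠ 0 := mzp_ne_zero hz _
  have hEq : ∑ α ∈ A, d α * (∏ j, ∏ t ∈ Finset.range (β j), ((m α j : ℂ) - t)) *
        mzp z (m α)
      = (∑ α ∈ A, d α * (∏ j, ∏ t ∈ Finset.range (β j), ((m α j : ℂ) - t)) *
        mzp z (m α - fun j => (β j : ℤ))) * q := by
    rw [Finset.sum_mul]
    refine Finset.sum_congr rfl fun α _ => ?_
    have hm : mzp z ((m α - fun j => (β j : ℤ)) + fun j => (β j : ℤ)) = mzp z (m α) := by
      congr 1
      funext j
      simp only [Pi.add_apply, Pi.sub_apply]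
      omega
    rw [mul_assoc, mul_assoc, hqdef, ← mzp_add hz, hm, mul_assoc]
  rw [hEq]
  constructor
  · intro h; rw [h, zero_mul]
  · intro h
    rcases mul_eq_zero.1 h with h' | h'
    · exact h'
    · exact absurd h' hq

lemma astar_eq (c : (Fin s → ℤ) →₀ ℂ) : astar c = GLS c.support (⇑c) id 0 := by
  funext z
  rw [astar, Finsupp.sum, GLS]
  refine Finset.sum_congr rfl fun α _ => ?_
  rw [mzp]
  simp

lemma g_eqOn (c : (Fin s → ℤ) →₀ ℂ) (Ξ : Matrix (Fin s) (Fin s) ℤ) :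
    Set.EqOn (fun z => astar c (powXi Ξ z)) (GLS c.support (⇑c) (Ξ.mulVec) 0) (Uset s) := by
  intro z hz
  rw [astar_eq c]
  show GLS c.support (⇑c) id 0 (powXi Ξ z) = _
  unfold GLS
  refine Finset.sum_congr rfl fun α _ => ?_
  congr 1
  have : (Ξ.mulVec α : Fin s → ℤ) - 0 = Ξ.mulVec α := by simp
  rw [this]
  have hid : (id α : Fin s → ℤ) - 0 = α := by simp
  rw [hid, mzp_powXi hz]

theorem main (c : (Fin s → ℤ) →₀ ℂ) (Ξ : Matrix (Fin s) (Fin s) ℤ)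
    (hdet : Ξ.det ≠ 0) (k : ℕ) (z₀ : Fin s → ℂ) (hz : ∀ j, z₀ j ≠ 0) :
    (∀ β : Fin s → ℕ, (∑ j, β j) ≤ k →
        pdMulti β (fun z => astar c (powXi Ξ z)) z₀ = 0) ↔
      ∀ β : Fin s → ℕ, (∑ j, β j) ≤ k → pdMulti β (astar c) (powXi Ξ z₀) = 0 := by
  classical
  have hz₀ : z₀ ∈ Uset s := hz
  have hw : powXi Ξ z₀ ∈ Uset s := powXi_mem hz₀
  set w := powXi Ξ z₀ with hwdef
  set ΞC := Ξ.map (Int.cast : ℤ → ℂ) with hΞCdef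
  have hdetC : IsUnit ΞC.det := by
    have : ΞC.det = ((Ξ.det : ℤ) : ℂ) := by
      rw [hΞCdef]
      exact (RingHom.map_det (Int.castRingHom ℂ) Ξ).symm
    rw [this]
    simpa [isUnit_iff_ne_zero] using fun h => hdet (by exact_mod_cast h)
  have hNM : ΞC * ΞC⁻¹ = 1 := Matrix.mul_nonsing_inv _ hdetC
  have hMN : ΞC⁻¹ * ΞC = 1 := Matrix.nonsing_inv_mul _ hdetC
  have hdegX : ∀ β : Fin s → ℕ, (PffX β).totalDegree ≤ ∑ j, β j :=
    fun β => totalDegree_PffL (fun j => le_of_eq (totalDegree_X j)) β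
  -- RHS side
  have hR : ∀ β : Fin s → ℕ, (pdMulti β (astar c) w = 0 ↔
      Tfun c.support (⇑c) w (PffX β) = 0) := by
    intro β
    rw [astar_eq c, side_iff β hw, Tfun_apply]
    have hsum : ∑ α ∈ c.support, c α *
          (∏ j, ∏ t ∈ Finset.range (β j), ((id α j : ℂ) - t)) * mzp w (id α)
        = ∑ α ∈ c.support, c α * mzp w α * MvPolynomial.aeval (czv α) (PffX β) := by
      refine Finset.sum_congr rfl fun α _ => ?_
      rw [aeval_PffX]
      simp only [id_eq]
      ring
    rw [hsum]
  -- LHS side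
  have hL : ∀ β : Fin s → ℕ, (pdMulti β (fun z => astar c (powXi Ξ z)) z₀ = 0 ↔
      Tfun c.support (⇑c) w (MvPolynomial.bind₁ (lineP ΞC) (PffX β)) = 0) := by
    intro β
    rw [pdMulti_congrU (g_eqOn c Ξ) β hz₀, side_iff β hz₀, Tfun_apply]
    have hsum : ∑ α ∈ c.support, c α *
          (∏ j, ∏ t ∈ Finset.range (β j), ((Ξ.mulVec α j : ℂ) - t)) * mzp z₀ (Ξ.mulVec α)
        = ∑ α ∈ c.support, c α * mzp w α *
            MvPolynomial.aeval (czv α) (MvPolynomial.bind₁ (lineP ΞC) (PffX β)) := by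
      refine Finset.sum_congr rfl fun α _ => ?_
      rw [aeval_bind_lineP, hΞCdef, czv_mulVec, aeval_PffX, hwdef, mzp_powXi hz₀]
      ring
    rw [hsum]
  -- span equivalences
  have hiff1 : (∀ β : Fin s → ℕ, (∑ j, β j) ≤ k →
        Tfun c.support (⇑c) w (MvPolynomial.bind₁ (lineP ΞC) (PffX β)) = 0) ↔
      (∀ P : MvPolynomial (Fin s) ℂ, P.totalDegree ≤ k →
        Tfun c.support (⇑c) w P = 0) :=
    key_iff _ _
      (fun β hβ => le_trans (totalDegree_bind₁_lineP _ _) (le_trans (hdegX β) hβ))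
      (fun P hP => mem_Vspan_bind hNM hMN hP)
  have hiff2 : (∀ β : Fin s → ℕ, (∑ j, β j) ≤ k →
        Tfun c.support (⇑c) w (PffX β) = 0) ↔
      (∀ P : MvPolynomial (Fin s) ℂ, P.totalDegree ≤ k →
        Tfun c.support (⇑c) w P = 0) :=
    key_iff _ _ (fun β hβ => le_trans (hdegX β) hβ) (fun P hP => mem_VspanX hP)
  constructor
  · intro h β hβ
    exact (hR β).2 (hiff2.2 (hiff1.1 fun β' hβ' => (hL β').1 (h β' hβ')) β hβ)
  · intro h β hβ
    exact (hL β).2 (hiff1.2 (hiff2.1 fun β' hβ' => (hR β').1 (h β' hβ')) β hβ)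

end St17

/-- for a finite Laurent sum `f` and `g(z) = f(z^Ξ)`, all partial
derivatives of `g` of total order `≤ k` vanish at `z₀ ∈ (ℂ∖{0})^s` if and only if all
partial derivatives of `f` of total order `≤ k` vanish at `z₀^Ξ`. -/
theorem stmt17 {s : ℕ} (c : (Fin s → ℤ) →₀ ℂ) (Ξ : Matrix (Fin s) (Fin s) ℤ)
    (hdet : Ξ.det ≠ 0) (k : ℕ) (z₀ : Fin s → ℂ) (hz : ∀ j, z₀ j ≠ 0) :
    (∀ β : Fin s → ℕ, (∑ j, β j) ≤ k →
        pdMulti β (fun z => astar c (powXi Ξ z)) z₀ = 0) ↔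
      ∀ β : Fin s → ℕ, (∑ j, β j) ≤ k → pdMulti β (astar c) (powXi Ξ z₀) = 0 :=
  St17.main c Ξ hdet k z₀ hz
end
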